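/- arXiv:1512.01909 — 2 statements merged into one kernel-verified Lean document; each statement's English description precedes it below -/
import Mathlib

section
/- Let (ξ_t)_{t∈[0,1]} be a family of real-valued random variables on a probability space (Ω, 𝓕, P), let α > 1, β > 0 be constants, and let G : [0,1] → ℝ be a continuous increasing function. Assume that for all 0 ≤ r ≤ s ≤ t ≤ 1 and all u > 0 one has P(δ[ξ](r,s,t) > u) ≤ (G(t) − G(r))^α · u^{−2β}. Then there exists a finite constant K = K(α, β), depending only on α and β, such that for all u > 0: P(Δ[ξ] > u) ≤ K · u^{−2β} · (G(1) − G(0))^α. -/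
open MeasureTheory Set

/-- `δ[ξ](r,s,t)(ω) = min(|ξ_s - ξ_r|, |ξ_t - ξ_s|)`. -/
noncomputable def procDelta {Ω : Type*} (ξ : ℝ → Ω → ℝ) (r s t : ℝ) (ω : Ω) : ℝ :=
  min |ξ s ω - ξ r ω| |ξ t ω - ξ s ω|

/-- The event `{Δ[ξ] > u}`, where `Δ[ξ]` is the supremum of `δ[ξ](r,s,t)` over all rational
triples `0 ≤ r ≤ s ≤ t ≤ 1`; the supremum exceeds `u` iff some triple does. -/
def DeltaGt {Ω : Type*} (ξ : ℝ → Ω → ℝ) (u : ℝ) : Set Ω :=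
  {ω | ∃ r s t : ℚ, 0 ≤ (r : ℝ) ∧ (r : ℝ) ≤ (s : ℝ) ∧ (s : ℝ) ≤ (t : ℝ) ∧ (t : ℝ) ≤ 1 ∧
    u < procDelta ξ (r : ℝ) (s : ℝ) (t : ℝ) ω}

/-- Key chaining inequality for minima of absolute differences. -/
lemma min_abs_chain (a b c d : ℝ) :
    min |b - a| |d - b| ≤ min |b - a| |c - b| + min |c - a| |d - c| := by
  rcases le_or_gt |b - a| |c - b| with hcb | hcb
  · have h1 : min |b - a| |c - b| = |b - a| := min_eq_left hcb
    have h2 : (0:ℝ) ≤ min |c - a| |d - c| := le_min (abs_nonneg _) (abs_nonneg _)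
    have := min_le_left |b - a| |d - b|
    linarith
  · rcases le_or_gt |d - c| |c - a| with hdc | hdc
    · have h1 : min |b - a| |c - b| = |c - b| := min_eq_right hcb.le
      have h2 : min |c - a| |d - c| = |d - c| := min_eq_right hdc
      have h3 : |d - b| ≤ |d - c| + |c - b| := by
        have := abs_sub_abs_le_abs_sub (d - c) (b - c)
        calc |d - b| = |(d - c) + (c - b)| := by ring_nf
          _ ≤ |d - c| + |c - b| := abs_add_le _ _
      have := min_le_right |b - a| |d - b|
      linarith
    · have h1 : min |b - a| |c - b| = |c - b| := min_eq_right hcb.le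
      have h2 : min |c - a| |d - c| = |c - a| := min_eq_left hdc.le
      have h3 : |b - a| ≤ |c - b| + |c - a| := by
        have h4 : b - a = (c - a) + (b - c) := by ring
        rw [h4]
        have h5 := abs_add_le (c - a) (b - c)
        rw [abs_sub_comm b c] at h5
        linarith
      have := min_le_left |b - a| |d - b|
      linarith

/-- Mirror version of the chaining inequality. -/
lemma min_abs_chain' (a b c d : ℝ) :
    min |b - a| |d - b| ≤ min |b - c| |d - b| + min |c - a| |d - c| := by
  have h := min_abs_chain d b c a
  rw [abs_sub_comm b d, abs_sub_comm a b, abs_sub_comm c b, abs_sub_comm c d,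
    abs_sub_comm a c] at h
  rw [min_comm |b - a| |d - b|, min_comm |b - c| |d - b|]
  linarith [h, min_comm |d - c| |c - a|]

/-- Existence of a suitable `ε` with geometric contraction factor. -/
lemma exists_eps (α β : ℝ) (hα : 1 < α) (hβ : 0 < β) :
    ∃ ε : ℝ, 0 < ε ∧ ε < 1 ∧ 2 ^ (1 - α) * (1 - ε) ^ (-(2 * β)) < 1 := by
  refine ⟨1 - 2 ^ ((1 - α) / (4 * β)), ?_, ?_, ?_⟩
  · have h1 : (1 - α) / (4 * β) < 0 :=
      div_neg_of_neg_of_pos (by linarith) (by linarith)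
    have := Real.rpow_lt_one_of_one_lt_of_neg (x := 2) one_lt_two h1
    linarith
  · have : (0:ℝ) < 2 ^ ((1 - α) / (4 * β)) := Real.rpow_pos_of_pos two_pos _
    linarith
  · have h2 : (1:ℝ) - (1 - 2 ^ ((1 - α) / (4 * β))) = 2 ^ ((1 - α) / (4 * β)) := by ring
    rw [h2, ← Real.rpow_mul (by norm_num : (0:ℝ) ≤ 2),
      ← Real.rpow_add two_pos]
    have h3 : 1 - α + (1 - α) / (4 * β) * -(2 * β) = (1 - α) / 2 := by
      field_simp
      ring
    rw [h3]
    exact Real.rpow_lt_one_of_one_lt_of_neg one_lt_two (by linarith)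

/-- Main arithmetic recursion step. -/
lemma arith_main (α β ε v L A B K C t : ℝ)
    (hα : 1 < α) (hβ : 0 < β) (hε0 : 0 < ε) (hε1 : ε < 1) (hv : 0 < v) (hL : 0 ≤ L)
    (hA : 0 ≤ A) (hA2 : A ≤ L / 2) (hB : 0 ≤ B) (hB2 : B ≤ L / 2)
    (ht : 0 < t) (hC : 0 ≤ C)
    (hKC : C * t ^ (-(2 * β)) ≤ K * (1 - 2 ^ (1 - α) * (1 - ε) ^ (-(2 * β))))
    (hK0 : 0 ≤ K) :
    K * A ^ α * ((1 - ε) * v) ^ (-(2 * β)) + K * B ^ α * ((1 - ε) * v) ^ (-(2 * β))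
      + C * (L ^ α * (t * v) ^ (-(2 * β))) ≤ K * L ^ α * v ^ (-(2 * β)) := by
  have hε1' : (0:ℝ) ≤ 1 - ε := by linarith
  have e1 : ((1 - ε) * v) ^ (-(2 * β)) = (1 - ε) ^ (-(2 * β)) * v ^ (-(2 * β)) :=
    Real.mul_rpow hε1' hv.le
  have e2 : (t * v) ^ (-(2 * β)) = t ^ (-(2 * β)) * v ^ (-(2 * β)) :=
    Real.mul_rpow ht.le hv.le
  have e3 : (L / 2) ^ α = L ^ α / 2 ^ α := Real.div_rpow hL (by norm_num) α
  have e4 : (2:ℝ) ^ (1 - α) = 2 / 2 ^ α := by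
    rw [Real.rpow_sub two_pos, Real.rpow_one]
  set X := L ^ α with hX
  set Y := v ^ (-(2 * β)) with hY
  set E := (1 - ε) ^ (-(2 * β)) with hE
  set Tt := t ^ (-(2 * β)) with hTt
  have hXnn : 0 ≤ X := Real.rpow_nonneg hL α
  have hYnn : 0 ≤ Y := Real.rpow_nonneg hv.le _
  have hEnn : 0 ≤ E := Real.rpow_nonneg hε1' _
  have hTnn : 0 ≤ Tt := Real.rpow_nonneg ht.le _
  have hp : (0:ℝ) < 2 ^ α := Real.rpow_pos_of_pos two_pos α
  have hAα : A ^ α ≤ X / 2 ^ α := by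
    rw [← e3]; exact Real.rpow_le_rpow hA hA2 (by linarith)
  have hBα : B ^ α ≤ X / 2 ^ α := by
    rw [← e3]; exact Real.rpow_le_rpow hB hB2 (by linarith)
  rw [e1, e2]
  have key : 2 * K * E / 2 ^ α + C * Tt ≤ K := by
    rw [e4] at hKC
    have : K * (1 - 2 / 2 ^ α * E) = K - 2 * K * E / 2 ^ α := by field_simp
    rw [this] at hKC
    linarith
  have step1 : K * A ^ α * (E * Y) + K * B ^ α * (E * Y) + C * (X * (Tt * Y))
      ≤ K * (X / 2 ^ α) * (E * Y) + K * (X / 2 ^ α) * (E * Y) + C * (X * (Tt * Y)) := by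
    have hEY : 0 ≤ E * Y := mul_nonneg hEnn hYnn
    gcongr
  have step2 : K * (X / 2 ^ α) * (E * Y) + K * (X / 2 ^ α) * (E * Y) + C * (X * (Tt * Y))
      = X * Y * (2 * K * E / 2 ^ α + C * Tt) := by field_simp; ring
  have step3 : X * Y * (2 * K * E / 2 ^ α + C * Tt) ≤ X * Y * K :=
    mul_le_mul_of_nonneg_left key (mul_nonneg hXnn hYnn)
  calc K * A ^ α * (E * Y) + K * B ^ α * (E * Y) + C * (X * (Tt * Y))
      ≤ X * Y * (2 * K * E / 2 ^ α + C * Tt) := by rw [← step2]; exact step1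
    _ ≤ X * Y * K := step3
    _ = K * X * Y := by ring

set_option maxHeartbeats 1000000 in
/-- Fixed–endpoint fluctuation inequality (Billingsley-type). -/
theorem lemma_fix (α β : ℝ) (hα : 1 < α) (hβ : 0 < β) :
    ∃ K : ℝ, 0 < K ∧ ∀ (n : ℕ) (Ω : Type) [MeasurableSpace Ω] (P : Measure Ω)
      (η : ℕ → Ω → ℝ) (w : ℕ → ℝ),
      (∀ i j, i ≤ j → j ≤ n → w i ≤ w j) →
      (∀ i j k, i ≤ j → j ≤ k → k ≤ n → ∀ v : ℝ, 0 < v →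
        P {ω | v < min |η j ω - η i ω| |η k ω - η j ω|} ≤
          ENNReal.ofReal ((w k - w i) ^ α * v ^ (-(2 * β)))) →
      ∀ v : ℝ, 0 < v →
        P {ω | ∃ j ≤ n, v < min |η j ω - η 0 ω| |η n ω - η j ω|} ≤
          ENNReal.ofReal (K * (w n - w 0) ^ α * v ^ (-(2 * β))) := by
  classical
  obtain ⟨ε, hε0, hε1, hγ⟩ := exists_eps α β hα hβ
  have hγ0 : 0 ≤ 2 ^ (1 - α) * (1 - ε) ^ (-(2 * β)) :=
    mul_nonneg (Real.rpow_nonneg (by norm_num) _) (Real.rpow_nonneg (by linarith) _)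
  set c : ℝ := 2 * (ε / 2) ^ (-(2 * β)) with hc
  have hc0 : 0 < c := by
    have := Real.rpow_pos_of_pos (show (0:ℝ) < ε / 2 by linarith) (-(2 * β))
    positivity
  set K : ℝ := c / (1 - 2 ^ (1 - α) * (1 - ε) ^ (-(2 * β))) with hKdef
  have hK0 : 0 < K := div_pos hc0 (by linarith)
  have hKC : c ≤ K * (1 - 2 ^ (1 - α) * (1 - ε) ^ (-(2 * β))) := by
    rw [hKdef, div_mul_cancel₀]
    · linarith
  refine ⟨K, hK0, ?_⟩
  intro n
  induction n using Nat.strong_induction_on with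
  | _ n IH =>
  intro Ω inst P η w hw H v hv
  by_cases hL : 0 < w n - w 0
  swap
  · -- degenerate case: zero total weight
    have hL0 : w n - w 0 = 0 :=
      le_antisymm (not_lt.mp hL) (by have := hw 0 n (Nat.zero_le n) le_rfl; linarith)
    have hzero : P {ω | ∃ j ≤ n, v < min |η j ω - η 0 ω| |η n ω - η j ω|} = 0 := by
      apply measure_mono_null
        (t := ⋃ j : ℕ, {ω | j ≤ n ∧ v < min |η j ω - η 0 ω| |η n ω - η j ω|})
      · rintro ω ⟨j, hj, hδ⟩
        exact mem_iUnion.mpr ⟨j, hj, hδ⟩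
      · rw [measure_iUnion_null_iff]
        intro j
        by_cases hj : j ≤ n
        · have hb := H 0 j n (Nat.zero_le j) hj le_rfl v hv
          rw [hL0, Real.zero_rpow (by linarith : α ≠ 0), zero_mul,
            ENNReal.ofReal_zero] at hb
          exact measure_mono_null (fun ω hω => hω.2) (le_zero_iff.mp hb)
        · exact measure_mono_null (fun ω hω => absurd hω.1 hj) measure_empty
    rw [hzero]; exact zero_le
  · set L : ℝ := w n - w 0 with hLdef
    set h : ℕ := Nat.findGreatest (fun t => w t - w 0 ≤ L / 2) n with hhdef
    have hspec : w h - w 0 ≤ L / 2 := by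
      have := Nat.findGreatest_spec (P := fun t => w t - w 0 ≤ L / 2) (Nat.zero_le n)
        (by simp only [sub_self]; linarith)
      exact this
    have hhn : h ≤ n := Nat.findGreatest_le n
    have hhlt : h < n := by
      rcases lt_or_eq_of_le hhn with h' | h'
      · exact h'
      · exfalso; rw [h'] at hspec; rw [hLdef] at hspec; linarith
    have h1n : h + 1 ≤ n := hhlt
    have hmax : ¬ (w (h + 1) - w 0 ≤ L / 2) :=
      Nat.findGreatest_is_greatest (Nat.lt_succ_self h) h1n
    have hA0 : 0 ≤ w h - w 0 := by have := hw 0 h (Nat.zero_le h) hhn; linarith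
    have hB0 : 0 ≤ w n - w (h + 1) := by have := hw (h + 1) n h1n le_rfl; linarith
    have hA2 : w h - w 0 ≤ L / 2 := hspec
    have hB2 : w n - w (h + 1) ≤ L / 2 := by
      push_neg at hmax; rw [hLdef] at hmax ⊢; linarith
    set v1 : ℝ := (1 - ε) * v with hv1def
    have hv1pos : 0 < v1 := mul_pos (by linarith) hv
    set v2 : ℝ := ε / 2 * v with hv2def
    have hv2pos : 0 < v2 := mul_pos (by linarith) hv
    have hv2v : v2 < v - v1 := by rw [hv2def, hv1def]; nlinarith
    set SL := {ω | ∃ j ≤ h, v1 < min |η j ω - η 0 ω| |η h ω - η j ω|} with hSL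
    set SR := {ω | ∃ j ≤ n - (h + 1),
      v1 < min |η (h + 1 + j) ω - η (h + 1) ω| |η n ω - η (h + 1 + j) ω|} with hSR
    set T1 := {ω | v2 < min |η h ω - η 0 ω| |η n ω - η h ω|} with hT1
    set T2 := {ω | v2 < min |η (h + 1) ω - η 0 ω| |η n ω - η (h + 1) ω|} with hT2
    have hincl : {ω | ∃ j ≤ n, v < min |η j ω - η 0 ω| |η n ω - η j ω|}
        ⊆ SL ∪ SR ∪ T1 ∪ T2 := by
      rintro ω ⟨j, hj, hδ⟩
      by_cases hcase : j ≤ h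
      · have key := min_abs_chain (η 0 ω) (η j ω) (η h ω) (η n ω)
        by_cases h1 : v1 < min |η j ω - η 0 ω| |η h ω - η j ω|
        · exact Or.inl (Or.inl (Or.inl ⟨j, hcase, h1⟩))
        · push_neg at h1
          refine Or.inl (Or.inr ?_)
          show v2 < min |η h ω - η 0 ω| |η n ω - η h ω|
          linarith
      · push_neg at hcase
        have hcase' : h + 1 ≤ j := hcase
        have key := min_abs_chain' (η 0 ω) (η j ω) (η (h + 1) ω) (η n ω)
        by_cases h1 : v1 < min |η j ω - η (h + 1) ω| |η n ω - η j ω|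
        · refine Or.inl (Or.inl (Or.inr ?_))
          refine ⟨j - (h + 1), by omega, ?_⟩
          have e1 : h + 1 + (j - (h + 1)) = j := by omega
          rw [e1]
          exact h1
        · push_neg at h1
          refine Or.inr ?_
          show v2 < min |η (h + 1) ω - η 0 ω| |η n ω - η (h + 1) ω|
          linarith
    -- the four probability bounds
    have hw' : ∀ i j, i ≤ j → j ≤ h → w i ≤ w j :=
      fun i j hij hj => hw i j hij (hj.trans hhn)
    have H' : ∀ i j k, i ≤ j → j ≤ k → k ≤ h → ∀ v' : ℝ, 0 < v' →
        P {ω | v' < min |η j ω - η i ω| |η k ω - η j ω|} ≤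
          ENNReal.ofReal ((w k - w i) ^ α * v' ^ (-(2 * β))) :=
      fun i j k hij hjk hk => H i j k hij hjk (hk.trans hhn)
    have bSL : P SL ≤ ENNReal.ofReal (K * (w h - w 0) ^ α * v1 ^ (-(2 * β))) :=
      IH h hhlt Ω P η w hw' H' v1 hv1pos
    have hw'' : ∀ i j, i ≤ j → j ≤ n - (h + 1) → w (h + 1 + i) ≤ w (h + 1 + j) :=
      fun i j hij hj => hw _ _ (by omega) (by omega)
    have H'' : ∀ i j k, i ≤ j → j ≤ k → k ≤ n - (h + 1) → ∀ v' : ℝ, 0 < v' →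
        P {ω | v' < min |η (h + 1 + j) ω - η (h + 1 + i) ω|
            |η (h + 1 + k) ω - η (h + 1 + j) ω|} ≤
          ENNReal.ofReal ((w (h + 1 + k) - w (h + 1 + i)) ^ α * v' ^ (-(2 * β))) :=
      fun i j k hij hjk hk => H (h + 1 + i) (h + 1 + j) (h + 1 + k)
        (by omega) (by omega) (by omega)
    have bSR : P SR ≤ ENNReal.ofReal (K * (w n - w (h + 1)) ^ α * v1 ^ (-(2 * β))) := by
      have := IH (n - (h + 1)) (by omega) Ω P (fun x => η (h + 1 + x))
        (fun x => w (h + 1 + x)) hw'' H'' v1 hv1pos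
      have e2 : h + 1 + (n - (h + 1)) = n := by omega
      rw [e2, Nat.add_zero] at this
      exact this
    have bT1 : P T1 ≤ ENNReal.ofReal ((w n - w 0) ^ α * v2 ^ (-(2 * β))) :=
      H 0 h n (Nat.zero_le h) hhn le_rfl v2 hv2pos
    have bT2 : P T2 ≤ ENNReal.ofReal ((w n - w 0) ^ α * v2 ^ (-(2 * β))) :=
      H 0 (h + 1) n (Nat.zero_le _) h1n le_rfl v2 hv2pos
    -- nonnegativity facts
    have nn1 : 0 ≤ K * (w h - w 0) ^ α * v1 ^ (-(2 * β)) :=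
      mul_nonneg (mul_nonneg hK0.le (Real.rpow_nonneg hA0 _)) (Real.rpow_nonneg hv1pos.le _)
    have nn2 : 0 ≤ K * (w n - w (h + 1)) ^ α * v1 ^ (-(2 * β)) :=
      mul_nonneg (mul_nonneg hK0.le (Real.rpow_nonneg hB0 _)) (Real.rpow_nonneg hv1pos.le _)
    have nn3 : 0 ≤ (w n - w 0) ^ α * v2 ^ (-(2 * β)) :=
      mul_nonneg (Real.rpow_nonneg (by linarith) _) (Real.rpow_nonneg hv2pos.le _)
    have harith := arith_main α β ε v L (w h - w 0) (w n - w (h + 1)) K 2 (ε / 2)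
      hα hβ hε0 hε1 hv (by rw [hLdef]; linarith) hA0 hA2 hB0 hB2 (by linarith)
      (by norm_num) (by rw [← hc]; exact hKC) hK0.le
    calc P {ω | ∃ j ≤ n, v < min |η j ω - η 0 ω| |η n ω - η j ω|}
        ≤ P (SL ∪ SR ∪ T1 ∪ T2) := measure_mono hincl
      _ ≤ P (SL ∪ SR ∪ T1) + P T2 := measure_union_le _ _
      _ ≤ (P (SL ∪ SR) + P T1) + P T2 := by gcongr; exact measure_union_le _ _
      _ ≤ ((P SL + P SR) + P T1) + P T2 := by gcongr; exact measure_union_le _ _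
      _ ≤ ((ENNReal.ofReal (K * (w h - w 0) ^ α * v1 ^ (-(2 * β))) +
            ENNReal.ofReal (K * (w n - w (h + 1)) ^ α * v1 ^ (-(2 * β)))) +
            ENNReal.ofReal ((w n - w 0) ^ α * v2 ^ (-(2 * β)))) +
            ENNReal.ofReal ((w n - w 0) ^ α * v2 ^ (-(2 * β))) := by
          exact add_le_add (add_le_add (add_le_add bSL bSR) bT1) bT2
      _ = ENNReal.ofReal (((K * (w h - w 0) ^ α * v1 ^ (-(2 * β)) +
            K * (w n - w (h + 1)) ^ α * v1 ^ (-(2 * β))) +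
            (w n - w 0) ^ α * v2 ^ (-(2 * β))) +
            (w n - w 0) ^ α * v2 ^ (-(2 * β))) := by
          rw [ENNReal.ofReal_add (by linarith) nn3, ENNReal.ofReal_add (by linarith) nn3,
            ENNReal.ofReal_add nn1 nn2]
      _ ≤ ENNReal.ofReal (K * (w n - w 0) ^ α * v ^ (-(2 * β))) := by
          apply ENNReal.ofReal_le_ofReal
          rw [hv1def, hv2def] at *
          rw [hLdef] at harith
          linarith

set_option maxHeartbeats 1000000 in
/-- Fluctuation inequality over all triples (finite index set). -/
theorem lemma_all (α β : ℝ) (hα : 1 < α) (hβ : 0 < β) :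
    ∃ K : ℝ, 0 < K ∧ ∀ (n : ℕ) (Ω : Type) [MeasurableSpace Ω] (P : Measure Ω)
      (η : ℕ → Ω → ℝ) (w : ℕ → ℝ),
      (∀ i j, i ≤ j → j ≤ n → w i ≤ w j) →
      (∀ i j k, i ≤ j → j ≤ k → k ≤ n → ∀ v : ℝ, 0 < v →
        P {ω | v < min |η j ω - η i ω| |η k ω - η j ω|} ≤
          ENNReal.ofReal ((w k - w i) ^ α * v ^ (-(2 * β)))) →
      ∀ v : ℝ, 0 < v →
        P {ω | ∃ i j k, i ≤ j ∧ j ≤ k ∧ k ≤ n ∧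
            v < min |η j ω - η i ω| |η k ω - η j ω|} ≤
          ENNReal.ofReal (K * (w n - w 0) ^ α * v ^ (-(2 * β))) := by
  classical
  obtain ⟨K₁, hK₁0, hK₁⟩ := lemma_fix α β hα hβ
  obtain ⟨ε, hε0, hε1, hγ⟩ := exists_eps α β hα hβ
  set c : ℝ := (2 * K₁ + 4) * (ε / 8) ^ (-(2 * β)) with hc
  have hc0 : 0 < c := by
    have := Real.rpow_pos_of_pos (show (0:ℝ) < ε / 8 by linarith) (-(2 * β))
    positivity
  set K : ℝ := c / (1 - 2 ^ (1 - α) * (1 - ε) ^ (-(2 * β))) with hKdef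
  have hK0 : 0 < K := div_pos hc0 (by linarith)
  have hKC : c ≤ K * (1 - 2 ^ (1 - α) * (1 - ε) ^ (-(2 * β))) := by
    rw [hKdef, div_mul_cancel₀]
    · linarith
  refine ⟨K, hK0, ?_⟩
  intro n
  induction n using Nat.strong_induction_on with
  | _ n IH =>
  intro Ω inst P η w hw H v hv
  by_cases hL : 0 < w n - w 0
  swap
  · -- degenerate case: zero total weight
    have hconst : ∀ x, x ≤ n → w x = w 0 := by
      intro x hx
      have h1 := hw 0 x (Nat.zero_le x) hx
      have h2 := hw x n hx le_rfl
      have h3 := hw 0 n (Nat.zero_le n) le_rfl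
      linarith [not_lt.mp hL]
    have hzero : P {ω | ∃ i j k, i ≤ j ∧ j ≤ k ∧ k ≤ n ∧
        v < min |η j ω - η i ω| |η k ω - η j ω|} = 0 := by
      apply measure_mono_null (t := ⋃ p : ℕ × ℕ × ℕ,
        {ω | p.1 ≤ p.2.1 ∧ p.2.1 ≤ p.2.2 ∧ p.2.2 ≤ n ∧
          v < min |η p.2.1 ω - η p.1 ω| |η p.2.2 ω - η p.2.1 ω|})
      · rintro ω ⟨i, j, k, hij, hjk, hkn, hδ⟩
        exact mem_iUnion.mpr ⟨(i, j, k), hij, hjk, hkn, hδ⟩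
      · rw [measure_iUnion_null_iff]
        rintro ⟨i, j, k⟩
        by_cases hcnd : i ≤ j ∧ j ≤ k ∧ k ≤ n
        · have hb := H i j k hcnd.1 hcnd.2.1 hcnd.2.2 v hv
          have hwz : w k - w i = 0 := by
            rw [hconst k hcnd.2.2, hconst i (by omega : i ≤ n)]; ring
          rw [hwz, Real.zero_rpow (by linarith : α ≠ 0), zero_mul,
            ENNReal.ofReal_zero] at hb
          exact measure_mono_null (fun ω hω => hω.2.2.2) (le_zero_iff.mp hb)
        · refine measure_mono_null (fun ω hω => ?_) measure_empty
          exact absurd ⟨hω.1, hω.2.1, hω.2.2.1⟩ hcnd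
    rw [hzero]; exact zero_le
  · set L : ℝ := w n - w 0 with hLdef
    set h : ℕ := Nat.findGreatest (fun t => w t - w 0 ≤ L / 2) n with hhdef
    have hspec : w h - w 0 ≤ L / 2 := by
      exact Nat.findGreatest_spec (P := fun t => w t - w 0 ≤ L / 2) (Nat.zero_le n)
        (by simp only [sub_self]; linarith)
    have hhn : h ≤ n := Nat.findGreatest_le n
    have hhlt : h < n := by
      rcases lt_or_eq_of_le hhn with h' | h'
      · exact h'
      · exfalso; rw [h'] at hspec; rw [hLdef] at hspec; linarith
    have h1n : h + 1 ≤ n := hhlt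
    have hmax : ¬ (w (h + 1) - w 0 ≤ L / 2) :=
      Nat.findGreatest_is_greatest (Nat.lt_succ_self h) h1n
    have hA0 : 0 ≤ w h - w 0 := by have := hw 0 h (Nat.zero_le h) hhn; linarith
    have hB0 : 0 ≤ w n - w (h + 1) := by have := hw (h + 1) n h1n le_rfl; linarith
    have hA2 : w h - w 0 ≤ L / 2 := hspec
    have hB2 : w n - w (h + 1) ≤ L / 2 := by
      push_neg at hmax; rw [hLdef] at hmax ⊢; linarith
    have hC0 : 0 ≤ w (h + 1) - w 0 := by
      have := hw 0 (h + 1) (Nat.zero_le _) h1n; linarith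
    have hC2 : w (h + 1) - w 0 ≤ L := by rw [hLdef]; linarith
    have hD0 : 0 ≤ w n - w h := by have := hw h n hhn le_rfl; linarith
    have hD2 : w n - w h ≤ L := by rw [hLdef]; linarith
    set v1 : ℝ := (1 - ε) * v with hv1def
    have hv1pos : 0 < v1 := mul_pos (by linarith) hv
    set v2 : ℝ := ε / 8 * v with hv2def
    have hv2pos : 0 < v2 := mul_pos (by linarith) hv
    have hgap : v1 + 2 * v2 < v := by rw [hv1def, hv2def]; nlinarith
    set SL := {ω | ∃ i j k, i ≤ j ∧ j ≤ k ∧ k ≤ h ∧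
      v1 < min |η j ω - η i ω| |η k ω - η j ω|} with hSLdef
    set SR := {ω | ∃ i j k, i ≤ j ∧ j ≤ k ∧ k ≤ n - (h + 1) ∧
      v1 < min |η (h + 1 + j) ω - η (h + 1 + i) ω| |η (h + 1 + k) ω - η (h + 1 + j) ω|}
      with hSRdef
    set FL := {ω | ∃ j ≤ h, v2 < min |η j ω - η 0 ω| |η h ω - η j ω|} with hFLdef
    set FR := {ω | ∃ j ≤ n - (h + 1),
      v2 < min |η (h + 1 + j) ω - η (h + 1) ω| |η n ω - η (h + 1 + j) ω|} with hFRdef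
    set T1 := {ω | v2 < min |η h ω - η 0 ω| |η (h + 1) ω - η h ω|} with hT1def
    set T2 := {ω | v2 < min |η h ω - η 0 ω| |η n ω - η h ω|} with hT2def
    set T3 := {ω | v2 < min |η (h + 1) ω - η h ω| |η n ω - η (h + 1) ω|} with hT3def
    set T4 := {ω | v2 < min |η (h + 1) ω - η 0 ω| |η n ω - η (h + 1) ω|} with hT4def
    have hincl : {ω | ∃ i j k, i ≤ j ∧ j ≤ k ∧ k ≤ n ∧
        v < min |η j ω - η i ω| |η k ω - η j ω|}
        ⊆ SL ∪ SR ∪ FL ∪ FR ∪ T1 ∪ T2 ∪ T3 ∪ T4 := by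
      rintro ω ⟨i, j, k, hij, hjk, hkn, hδ⟩
      by_cases hSLm : ω ∈ SL
      · exact Or.inl (Or.inl (Or.inl (Or.inl (Or.inl (Or.inl (Or.inl hSLm))))))
      by_cases hSRm : ω ∈ SR
      · exact Or.inl (Or.inl (Or.inl (Or.inl (Or.inl (Or.inl (Or.inr hSRm))))))
      by_cases hFLm : ω ∈ FL
      · exact Or.inl (Or.inl (Or.inl (Or.inl (Or.inl (Or.inr hFLm)))))
      by_cases hFRm : ω ∈ FR
      · exact Or.inl (Or.inl (Or.inl (Or.inl (Or.inr hFRm))))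
      by_cases hT1m : ω ∈ T1
      · exact Or.inl (Or.inl (Or.inl (Or.inr hT1m)))
      by_cases hT2m : ω ∈ T2
      · exact Or.inl (Or.inl (Or.inr hT2m))
      by_cases hT3m : ω ∈ T3
      · exact Or.inl (Or.inr hT3m)
      by_cases hT4m : ω ∈ T4
      · exact Or.inr hT4m
      -- now derive a contradiction
      exfalso
      rw [hSLdef] at hSLm; rw [hSRdef] at hSRm; rw [hFLdef] at hFLm
      rw [hFRdef] at hFRm
      simp only [mem_setOf_eq, not_exists, not_and, not_lt] at hSLm hSRm hFLm hFRm
      rw [hT1def] at hT1m; rw [hT2def] at hT2m; rw [hT3def] at hT3m; rw [hT4def] at hT4m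
      simp only [mem_setOf_eq, not_lt] at hT1m hT2m hT3m hT4m
      have nSL : ∀ a b c', a ≤ b → b ≤ c' → c' ≤ h →
          min |η b ω - η a ω| |η c' ω - η b ω| ≤ v1 := fun a b c' h1 h2 h3 =>
        hSLm a b c' h1 h2 h3
      have nSR : ∀ a b c', h + 1 ≤ a → a ≤ b → b ≤ c' → c' ≤ n →
          min |η b ω - η a ω| |η c' ω - η b ω| ≤ v1 := by
        intro a b c' ha h1 h2 h3
        have e1 : h + 1 + (a - (h + 1)) = a := by omega
        have e2 : h + 1 + (b - (h + 1)) = b := by omega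
        have e3 : h + 1 + (c' - (h + 1)) = c' := by omega
        have := hSRm (a - (h + 1)) (b - (h + 1)) (c' - (h + 1))
          (by omega) (by omega) (by omega)
        rw [e1, e2, e3] at this
        exact this
      have nFL : ∀ a, a ≤ h → min |η a ω - η 0 ω| |η h ω - η a ω| ≤ v2 :=
        fun a ha => hFLm a ha
      have nFR : ∀ a, h + 1 ≤ a → a ≤ n →
          min |η a ω - η (h + 1) ω| |η n ω - η a ω| ≤ v2 := by
        intro a ha h1
        have e1 : h + 1 + (a - (h + 1)) = a := by omega
        have := hFRm (a - (h + 1)) (by omega)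
        rw [e1] at this
        exact this
      by_cases hk : k ≤ h
      · exact absurd hδ (not_lt.mpr (le_trans (nSL i j k hij hjk hk) (by linarith)))
      push_neg at hk
      have hk' : h + 1 ≤ k := hk
      by_cases hi : h + 1 ≤ i
      · exact absurd hδ (not_lt.mpr (le_trans (nSR i j k hi hij hjk hkn) (by linarith)))
      push_neg at hi
      have hi' : i ≤ h := by omega
      by_cases hj : j ≤ h
      · -- crossing, middle point on the left
        have key := min_abs_chain (η i ω) (η j ω) (η h ω) (η k ω)
        have b1 : min |η j ω - η i ω| |η h ω - η j ω| ≤ v1 := nSL i j h hij hj le_rfl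
        have b2 : min |η h ω - η i ω| |η k ω - η h ω| ≤ 2 * v2 := by
          by_cases cA : |η h ω - η i ω| ≤ v2
          · exact le_trans (min_le_left _ _) (by linarith)
          · have hio : |η i ω - η 0 ω| ≤ v2 := by
              rcases min_le_iff.mp (nFL i hi') with h' | h'
              · exact h'
              · exact absurd h' cA
            have hAp : |η h ω - η i ω| ≤ |η h ω - η 0 ω| + v2 := by
              have t1 := abs_sub_le (η h ω) (η 0 ω) (η i ω)
              rw [abs_sub_comm (η 0 ω) (η i ω)] at t1
              linarith
            rcases min_le_iff.mp (nFR k hk' hkn) with h' | h'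
            · have hBp : |η k ω - η h ω| ≤ |η (h + 1) ω - η h ω| + v2 := by
                have t1 := abs_sub_le (η k ω) (η (h + 1) ω) (η h ω)
                linarith
              have m1 : min |η h ω - η i ω| |η k ω - η h ω| ≤
                  min (|η h ω - η 0 ω| + v2) (|η (h + 1) ω - η h ω| + v2) :=
                min_le_min hAp hBp
              rw [min_add_add_right] at m1
              linarith [hT1m]
            · have hBp : |η k ω - η h ω| ≤ |η n ω - η h ω| + v2 := by
                have t1 := abs_sub_le (η k ω) (η n ω) (η h ω)
                rw [abs_sub_comm (η k ω) (η n ω)] at t1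
                linarith
              have m1 : min |η h ω - η i ω| |η k ω - η h ω| ≤
                  min (|η h ω - η 0 ω| + v2) (|η n ω - η h ω| + v2) :=
                min_le_min hAp hBp
              rw [min_add_add_right] at m1
              linarith [hT2m]
        linarith
      · -- crossing, middle point on the right
        push_neg at hj
        have hj' : h + 1 ≤ j := hj
        have key := min_abs_chain' (η i ω) (η j ω) (η (h + 1) ω) (η k ω)
        have b1 : min |η j ω - η (h + 1) ω| |η k ω - η j ω| ≤ v1 :=
          nSR (h + 1) j k le_rfl hj' hjk hkn
        have b2 : min |η (h + 1) ω - η i ω| |η k ω - η (h + 1) ω| ≤ 2 * v2 := by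
          by_cases cB : |η k ω - η (h + 1) ω| ≤ v2
          · exact le_trans (min_le_right _ _) (by linarith)
          · have hnk : |η n ω - η k ω| ≤ v2 := by
              rcases min_le_iff.mp (nFR k hk' hkn) with h' | h'
              · exact absurd h' cB
              · exact h'
            have hBp : |η k ω - η (h + 1) ω| ≤ |η n ω - η (h + 1) ω| + v2 := by
              have t1 := abs_sub_le (η k ω) (η n ω) (η (h + 1) ω)
              rw [abs_sub_comm (η k ω) (η n ω)] at t1
              linarith
            rcases min_le_iff.mp (nFL i hi') with h' | h'
            · have hAp : |η (h + 1) ω - η i ω| ≤ |η (h + 1) ω - η 0 ω| + v2 := by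
                have t1 := abs_sub_le (η (h + 1) ω) (η 0 ω) (η i ω)
                rw [abs_sub_comm (η 0 ω) (η i ω)] at t1
                linarith
              have m1 : min |η (h + 1) ω - η i ω| |η k ω - η (h + 1) ω| ≤
                  min (|η (h + 1) ω - η 0 ω| + v2) (|η n ω - η (h + 1) ω| + v2) :=
                min_le_min hAp hBp
              rw [min_add_add_right] at m1
              linarith [hT4m]
            · have hAp : |η (h + 1) ω - η i ω| ≤ |η (h + 1) ω - η h ω| + v2 := by
                have t1 := abs_sub_le (η (h + 1) ω) (η h ω) (η i ω)
                linarith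
              have m1 : min |η (h + 1) ω - η i ω| |η k ω - η (h + 1) ω| ≤
                  min (|η (h + 1) ω - η h ω| + v2) (|η n ω - η (h + 1) ω| + v2) :=
                min_le_min hAp hBp
              rw [min_add_add_right] at m1
              linarith [hT3m]
        linarith
    -- measure bounds
    have hw' : ∀ i j, i ≤ j → j ≤ h → w i ≤ w j :=
      fun i j hij hj => hw i j hij (hj.trans hhn)
    have H' : ∀ i j k, i ≤ j → j ≤ k → k ≤ h → ∀ v' : ℝ, 0 < v' →
        P {ω | v' < min |η j ω - η i ω| |η k ω - η j ω|} ≤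
          ENNReal.ofReal ((w k - w i) ^ α * v' ^ (-(2 * β))) :=
      fun i j k hij hjk hk => H i j k hij hjk (hk.trans hhn)
    have hw'' : ∀ i j, i ≤ j → j ≤ n - (h + 1) → w (h + 1 + i) ≤ w (h + 1 + j) :=
      fun i j hij hj => hw _ _ (by omega) (by omega)
    have H'' : ∀ i j k, i ≤ j → j ≤ k → k ≤ n - (h + 1) → ∀ v' : ℝ, 0 < v' →
        P {ω | v' < min |η (h + 1 + j) ω - η (h + 1 + i) ω|
            |η (h + 1 + k) ω - η (h + 1 + j) ω|} ≤
          ENNReal.ofReal ((w (h + 1 + k) - w (h + 1 + i)) ^ α * v' ^ (-(2 * β))) :=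
      fun i j k hij hjk hk => H (h + 1 + i) (h + 1 + j) (h + 1 + k)
        (by omega) (by omega) (by omega)
    have bSL : P SL ≤ ENNReal.ofReal (K * (w h - w 0) ^ α * v1 ^ (-(2 * β))) :=
      IH h hhlt Ω P η w hw' H' v1 hv1pos
    have bSR : P SR ≤ ENNReal.ofReal (K * (w n - w (h + 1)) ^ α * v1 ^ (-(2 * β))) := by
      have := IH (n - (h + 1)) (by omega) Ω P (fun x => η (h + 1 + x))
        (fun x => w (h + 1 + x)) hw'' H'' v1 hv1pos
      have e2 : h + 1 + (n - (h + 1)) = n := by omega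
      rw [e2, Nat.add_zero] at this
      exact this
    have bFL : P FL ≤ ENNReal.ofReal (K₁ * (w h - w 0) ^ α * v2 ^ (-(2 * β))) :=
      hK₁ h Ω P η w hw' H' v2 hv2pos
    have bFR : P FR ≤ ENNReal.ofReal (K₁ * (w n - w (h + 1)) ^ α * v2 ^ (-(2 * β))) := by
      have := hK₁ (n - (h + 1)) Ω P (fun x => η (h + 1 + x))
        (fun x => w (h + 1 + x)) hw'' H'' v2 hv2pos
      have e2 : h + 1 + (n - (h + 1)) = n := by omega
      rw [e2, Nat.add_zero] at this
      exact this
    have bT1 : P T1 ≤ ENNReal.ofReal ((w (h + 1) - w 0) ^ α * v2 ^ (-(2 * β))) :=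
      H 0 h (h + 1) (Nat.zero_le h) (Nat.le_succ h) h1n v2 hv2pos
    have bT2 : P T2 ≤ ENNReal.ofReal ((w n - w 0) ^ α * v2 ^ (-(2 * β))) :=
      H 0 h n (Nat.zero_le h) hhn le_rfl v2 hv2pos
    have bT3 : P T3 ≤ ENNReal.ofReal ((w n - w h) ^ α * v2 ^ (-(2 * β))) :=
      H h (h + 1) n (Nat.le_succ h) h1n le_rfl v2 hv2pos
    have bT4 : P T4 ≤ ENNReal.ofReal ((w n - w 0) ^ α * v2 ^ (-(2 * β))) :=
      H 0 (h + 1) n (Nat.zero_le _) h1n le_rfl v2 hv2pos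
    -- nonnegativity
    have nv1 : 0 ≤ v1 ^ (-(2 * β)) := Real.rpow_nonneg hv1pos.le _
    have nv2 : 0 ≤ v2 ^ (-(2 * β)) := Real.rpow_nonneg hv2pos.le _
    have hL0 : (0:ℝ) ≤ L := by rw [hLdef]; linarith
    have nLα : 0 ≤ L ^ α := Real.rpow_nonneg hL0 _
    have nn1 : 0 ≤ K * (w h - w 0) ^ α * v1 ^ (-(2 * β)) :=
      mul_nonneg (mul_nonneg hK0.le (Real.rpow_nonneg hA0 _)) nv1
    have nn2 : 0 ≤ K * (w n - w (h + 1)) ^ α * v1 ^ (-(2 * β)) :=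
      mul_nonneg (mul_nonneg hK0.le (Real.rpow_nonneg hB0 _)) nv1
    have nn3 : 0 ≤ K₁ * (w h - w 0) ^ α * v2 ^ (-(2 * β)) :=
      mul_nonneg (mul_nonneg hK₁0.le (Real.rpow_nonneg hA0 _)) nv2
    have nn4 : 0 ≤ K₁ * (w n - w (h + 1)) ^ α * v2 ^ (-(2 * β)) :=
      mul_nonneg (mul_nonneg hK₁0.le (Real.rpow_nonneg hB0 _)) nv2
    have nn5 : 0 ≤ (w (h + 1) - w 0) ^ α * v2 ^ (-(2 * β)) :=
      mul_nonneg (Real.rpow_nonneg hC0 _) nv2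
    have nn6 : 0 ≤ (w n - w 0) ^ α * v2 ^ (-(2 * β)) :=
      mul_nonneg (Real.rpow_nonneg (by linarith) _) nv2
    have nn7 : 0 ≤ (w n - w h) ^ α * v2 ^ (-(2 * β)) :=
      mul_nonneg (Real.rpow_nonneg hD0 _) nv2
    -- rpow monotone bounds
    have r1 : (w h - w 0) ^ α ≤ L ^ α :=
      Real.rpow_le_rpow hA0 (by linarith) (by linarith)
    have r2 : (w n - w (h + 1)) ^ α ≤ L ^ α :=
      Real.rpow_le_rpow hB0 (by linarith) (by linarith)
    have r3 : (w (h + 1) - w 0) ^ α ≤ L ^ α :=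
      Real.rpow_le_rpow hC0 hC2 (by linarith)
    have r4 : (w n - w h) ^ α ≤ L ^ α :=
      Real.rpow_le_rpow hD0 hD2 (by linarith)
    have r5 : (w n - w 0) ^ α ≤ L ^ α := le_of_eq (by rw [hLdef])
    have m3 : K₁ * (w h - w 0) ^ α * v2 ^ (-(2 * β)) ≤ K₁ * L ^ α * v2 ^ (-(2 * β)) :=
      mul_le_mul_of_nonneg_right (mul_le_mul_of_nonneg_left r1 hK₁0.le) nv2
    have m4 : K₁ * (w n - w (h + 1)) ^ α * v2 ^ (-(2 * β)) ≤
        K₁ * L ^ α * v2 ^ (-(2 * β)) :=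
      mul_le_mul_of_nonneg_right (mul_le_mul_of_nonneg_left r2 hK₁0.le) nv2
    have m5 : (w (h + 1) - w 0) ^ α * v2 ^ (-(2 * β)) ≤ L ^ α * v2 ^ (-(2 * β)) :=
      mul_le_mul_of_nonneg_right r3 nv2
    have m6 : (w n - w 0) ^ α * v2 ^ (-(2 * β)) ≤ L ^ α * v2 ^ (-(2 * β)) :=
      mul_le_mul_of_nonneg_right r5 nv2
    have m7 : (w n - w h) ^ α * v2 ^ (-(2 * β)) ≤ L ^ α * v2 ^ (-(2 * β)) :=
      mul_le_mul_of_nonneg_right r4 nv2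
    have harith := arith_main α β ε v L (w h - w 0) (w n - w (h + 1)) K (2 * K₁ + 4)
      (ε / 8) hα hβ hε0 hε1 hv hL0 hA0 hA2 hB0 hB2 (by linarith)
      (by linarith) (by rw [← hc]; exact hKC) hK0.le
    calc P {ω | ∃ i j k, i ≤ j ∧ j ≤ k ∧ k ≤ n ∧
          v < min |η j ω - η i ω| |η k ω - η j ω|}
        ≤ P (SL ∪ SR ∪ FL ∪ FR ∪ T1 ∪ T2 ∪ T3 ∪ T4) := measure_mono hincl
      _ ≤ P (SL ∪ SR ∪ FL ∪ FR ∪ T1 ∪ T2 ∪ T3) + P T4 := measure_union_le _ _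
      _ ≤ (P (SL ∪ SR ∪ FL ∪ FR ∪ T1 ∪ T2) + P T3) + P T4 := by
          gcongr; exact measure_union_le _ _
      _ ≤ ((P (SL ∪ SR ∪ FL ∪ FR ∪ T1) + P T2) + P T3) + P T4 := by
          gcongr; exact measure_union_le _ _
      _ ≤ (((P (SL ∪ SR ∪ FL ∪ FR) + P T1) + P T2) + P T3) + P T4 := by
          gcongr; exact measure_union_le _ _
      _ ≤ ((((P (SL ∪ SR ∪ FL) + P FR) + P T1) + P T2) + P T3) + P T4 := by
          gcongr; exact measure_union_le _ _
      _ ≤ (((((P (SL ∪ SR) + P FL) + P FR) + P T1) + P T2) + P T3) + P T4 := by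
          gcongr; exact measure_union_le _ _
      _ ≤ ((((((P SL + P SR) + P FL) + P FR) + P T1) + P T2) + P T3) + P T4 := by
          gcongr; exact measure_union_le _ _
      _ ≤ ((((((ENNReal.ofReal (K * (w h - w 0) ^ α * v1 ^ (-(2 * β))) +
            ENNReal.ofReal (K * (w n - w (h + 1)) ^ α * v1 ^ (-(2 * β)))) +
            ENNReal.ofReal (K₁ * (w h - w 0) ^ α * v2 ^ (-(2 * β)))) +
            ENNReal.ofReal (K₁ * (w n - w (h + 1)) ^ α * v2 ^ (-(2 * β)))) +
            ENNReal.ofReal ((w (h + 1) - w 0) ^ α * v2 ^ (-(2 * β)))) +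
            ENNReal.ofReal ((w n - w 0) ^ α * v2 ^ (-(2 * β)))) +
            ENNReal.ofReal ((w n - w h) ^ α * v2 ^ (-(2 * β)))) +
            ENNReal.ofReal ((w n - w 0) ^ α * v2 ^ (-(2 * β))) := by
          exact add_le_add (add_le_add (add_le_add (add_le_add (add_le_add
            (add_le_add (add_le_add bSL bSR) bFL) bFR) bT1) bT2) bT3) bT4
      _ = ENNReal.ofReal (((((((K * (w h - w 0) ^ α * v1 ^ (-(2 * β)) +
            K * (w n - w (h + 1)) ^ α * v1 ^ (-(2 * β))) +
            K₁ * (w h - w 0) ^ α * v2 ^ (-(2 * β))) +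
            K₁ * (w n - w (h + 1)) ^ α * v2 ^ (-(2 * β))) +
            (w (h + 1) - w 0) ^ α * v2 ^ (-(2 * β))) +
            (w n - w 0) ^ α * v2 ^ (-(2 * β))) +
            (w n - w h) ^ α * v2 ^ (-(2 * β))) +
            (w n - w 0) ^ α * v2 ^ (-(2 * β))) := by
          rw [ENNReal.ofReal_add (by positivity) nn6,
            ENNReal.ofReal_add (by positivity) nn7,
            ENNReal.ofReal_add (by positivity) nn6,
            ENNReal.ofReal_add (by positivity) nn5,
            ENNReal.ofReal_add (by positivity) nn4,
            ENNReal.ofReal_add (by positivity) nn3,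
            ENNReal.ofReal_add nn1 nn2]
      _ ≤ ENNReal.ofReal (K * (w n - w 0) ^ α * v ^ (-(2 * β))) := by
          apply ENNReal.ofReal_le_ofReal
          rw [hv1def, hv2def] at *
          rw [hLdef] at harith m3 m4 m5 m6 m7
          linarith

/-- A rational in `[0,1]` whose denominator divides `M` is a grid point `i/M`. -/
lemma rat_idx (q : ℚ) (M : ℕ) (hM : 0 < M) (h0 : 0 ≤ (q:ℝ)) (h1 : (q:ℝ) ≤ 1)
    (hdvd : q.den ∣ M) : ∃ i : ℕ, i ≤ M ∧ (q:ℝ) = (i:ℝ) / (M:ℝ) := by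
  obtain ⟨c, hc⟩ := hdvd
  have hden : 0 < q.den := q.pos
  have hc0 : 0 < c := by
    rcases Nat.eq_zero_or_pos c with h | h
    · rw [h, mul_zero] at hc; omega
    · exact h
  have hq0 : 0 ≤ q := by exact_mod_cast h0
  have hnum : 0 ≤ q.num := Rat.num_nonneg.mpr hq0
  have hr : (q:ℝ) = (q.num:ℝ) / (q.den:ℝ) := Rat.cast_def q
  have hdenR : (0:ℝ) < (q.den:ℝ) := by exact_mod_cast hden
  refine ⟨q.num.toNat * c, ?_, ?_⟩
  · have hnd : q.num ≤ q.den := by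
      rw [hr] at h1
      have := (div_le_one hdenR).mp h1
      exact_mod_cast this
    have htn : q.num.toNat ≤ q.den := by omega
    calc q.num.toNat * c ≤ q.den * c := Nat.mul_le_mul_right c htn
      _ = M := hc.symm
  · rw [hr, hc]
    have hcR : ((c:ℕ):ℝ) ≠ 0 := by exact_mod_cast hc0.ne'
    have htn : ((q.num.toNat : ℕ) : ℝ) = (q.num : ℝ) := by
      exact_mod_cast Int.toNat_of_nonneg hnum
    push_cast
    rw [htn, mul_div_mul_right _ _ hcR]

/-- Proposition 3.0, conclusion (3.4): there is a finite constant `K = K(α,β)`, depending only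
on `α` and `β`, such that for any probability space, any process `ξ` and any continuous
increasing `G` satisfying the tail hypothesis (3.3), one has
`P(Δ[ξ] > u) ≤ K · u^{-2β} · (G(1) - G(0))^α` for all `u > 0`. -/
theorem proposition_3_0 (α β : ℝ) (hα : 1 < α) (hβ : 0 < β) :
    ∃ K : ℝ, 0 < K ∧
      ∀ (Ω : Type) [MeasurableSpace Ω] (P : Measure Ω), IsProbabilityMeasure P →
      ∀ (ξ : ℝ → Ω → ℝ) (G : ℝ → ℝ),
        ContinuousOn G (Icc 0 1) → StrictMonoOn G (Icc 0 1) →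
        (∀ r s t : ℝ, 0 ≤ r → r ≤ s → s ≤ t → t ≤ 1 → ∀ u : ℝ, 0 < u →
          P {ω | u < procDelta ξ r s t ω} ≤
            ENNReal.ofReal ((G t - G r) ^ α * u ^ (-(2 * β)))) →
        ∀ u : ℝ, 0 < u →
          P (DeltaGt ξ u) ≤ ENNReal.ofReal (K * u ^ (-(2 * β)) * (G 1 - G 0) ^ α) := by
  classical
  obtain ⟨K, hK0, hK⟩ := lemma_all α β hα hβ
  refine ⟨K, hK0, ?_⟩
  intro Ω mΩ P _hP ξ G _hGc hGm hH u hu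
  set E : ℕ → Set Ω := fun m => {ω | ∃ i j k, i ≤ j ∧ j ≤ k ∧ k ≤ m.factorial ∧
    u < min |ξ ((j:ℝ)/(m.factorial:ℝ)) ω - ξ ((i:ℝ)/(m.factorial:ℝ)) ω|
        |ξ ((k:ℝ)/(m.factorial:ℝ)) ω - ξ ((j:ℝ)/(m.factorial:ℝ)) ω|} with hEdef
  have hfacR : ∀ m : ℕ, (0:ℝ) < (m.factorial : ℝ) := fun m => by
    exact_mod_cast m.factorial_pos
  -- monotonicity of the grid events
  have hmono : Monotone E := by
    apply monotone_nat_of_le_succ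
    intro m ω hω
    obtain ⟨i, j, k, hij, hjk, hk, hδ⟩ := hω
    have hcast : ∀ a : ℕ, ((a * (m+1) : ℕ):ℝ) / (((m+1).factorial : ℕ):ℝ)
        = (a:ℝ) / (m.factorial : ℝ) := by
      intro a
      have hfs : ((m+1).factorial : ℝ) = (m+1) * (m.factorial : ℝ) := by
        exact_mod_cast Nat.factorial_succ m
      rw [hfs]
      push_cast
      have h1 : (m.factorial : ℝ) ≠ 0 := (hfacR m).ne'
      have h2 : ((m:ℝ) + 1) ≠ 0 := by positivity
      field_simp
    refine ⟨i * (m+1), j * (m+1), k * (m+1),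
      Nat.mul_le_mul_right _ hij, Nat.mul_le_mul_right _ hjk, ?_, ?_⟩
    · rw [Nat.factorial_succ, mul_comm (m+1) m.factorial]
      exact Nat.mul_le_mul_right _ hk
    · rw [hcast i, hcast j, hcast k]
      exact hδ
  -- DeltaGt is the union of the grid events
  have hsub1 : DeltaGt ξ u ⊆ ⋃ m, E m := by
    rintro ω ⟨r, s, t, h0r, hrs, hst, ht1, hδ⟩
    simp only [procDelta] at hδ
    set d := r.den * s.den * t.den with hd
    have hd0 : 0 < d := by
      have := r.pos; have := s.pos; have := t.pos
      positivity
    have hdf : d ∣ d.factorial := Nat.dvd_factorial hd0 le_rfl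
    have hfp : 0 < d.factorial := d.factorial_pos
    obtain ⟨i, hiM, hieq⟩ := rat_idx r d.factorial hfp h0r
      (le_trans hrs (le_trans hst ht1))
      ((dvd_mul_of_dvd_left (dvd_mul_right r.den s.den) t.den).trans hdf)
    obtain ⟨j, hjM, hjeq⟩ := rat_idx s d.factorial hfp (le_trans h0r hrs)
      (le_trans hst ht1)
      ((dvd_mul_of_dvd_left (dvd_mul_left s.den r.den) t.den).trans hdf)
    obtain ⟨k, hkM, hkeq⟩ := rat_idx t d.factorial hfp
      (le_trans h0r (le_trans hrs hst)) ht1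
      ((dvd_mul_left t.den (r.den * s.den)).trans hdf)
    have hFR : (0:ℝ) < (d.factorial : ℝ) := hfacR d
    refine mem_iUnion.mpr ⟨d, i, j, k, ?_, ?_, hkM, ?_⟩
    · rw [hieq, hjeq] at hrs
      have := (div_le_div_iff_of_pos_right hFR).mp hrs
      exact_mod_cast this
    · rw [hjeq, hkeq] at hst
      have := (div_le_div_iff_of_pos_right hFR).mp hst
      exact_mod_cast this
    · rw [hieq, hjeq, hkeq] at hδ
      exact hδ
  have hsub2 : ⋃ m, E m ⊆ DeltaGt ξ u := by
    intro ω hω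
    obtain ⟨m, i, j, k, hij, hjk, hk, hδ⟩ := mem_iUnion.mp hω
    have hFR : (0:ℝ) < (m.factorial : ℝ) := hfacR m
    have hQ : ∀ a : ℕ, (((a:ℚ) / (m.factorial:ℚ) : ℚ) : ℝ) = (a:ℝ) / (m.factorial:ℝ) := by
      intro a; push_cast; ring
    refine ⟨(i:ℚ)/(m.factorial:ℚ), (j:ℚ)/(m.factorial:ℚ), (k:ℚ)/(m.factorial:ℚ),
      ?_, ?_, ?_, ?_, ?_⟩
    · rw [hQ]; positivity
    · rw [hQ, hQ]
      exact (div_le_div_iff_of_pos_right hFR).mpr (by exact_mod_cast hij)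
    · rw [hQ, hQ]
      exact (div_le_div_iff_of_pos_right hFR).mpr (by exact_mod_cast hjk)
    · rw [hQ]
      exact (div_le_one hFR).mpr (by exact_mod_cast hk)
    · simp only [procDelta]
      rw [hQ, hQ, hQ]
      exact hδ
  have hEq : DeltaGt ξ u = ⋃ m, E m := Subset.antisymm hsub1 hsub2
  -- bound each grid event
  have hbound : ∀ m, P (E m) ≤
      ENNReal.ofReal (K * (G 1 - G 0) ^ α * u ^ (-(2 * β))) := by
    intro m
    have hN : (0:ℝ) < (m.factorial : ℝ) := hfacR m
    have hmem : ∀ a : ℕ, a ≤ m.factorial → (a:ℝ)/(m.factorial:ℝ) ∈ Icc (0:ℝ) 1 :=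
      fun a ha => ⟨by positivity, (div_le_one hN).mpr (by exact_mod_cast ha)⟩
    have hw : ∀ i j, i ≤ j → j ≤ m.factorial →
        G ((i:ℝ)/(m.factorial:ℝ)) ≤ G ((j:ℝ)/(m.factorial:ℝ)) := by
      intro i j hij hj
      exact hGm.monotoneOn (hmem i (hij.trans hj)) (hmem j hj)
        ((div_le_div_iff_of_pos_right hN).mpr (by exact_mod_cast hij))
    have H : ∀ i j k, i ≤ j → j ≤ k → k ≤ m.factorial → ∀ v : ℝ, 0 < v →
        P {ω | v < min |ξ ((j:ℝ)/(m.factorial:ℝ)) ω - ξ ((i:ℝ)/(m.factorial:ℝ)) ω|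
            |ξ ((k:ℝ)/(m.factorial:ℝ)) ω - ξ ((j:ℝ)/(m.factorial:ℝ)) ω|} ≤
          ENNReal.ofReal ((G ((k:ℝ)/(m.factorial:ℝ)) - G ((i:ℝ)/(m.factorial:ℝ))) ^ α
            * v ^ (-(2 * β))) := by
      intro i j k hij hjk hk v hv
      have := hH ((i:ℝ)/(m.factorial:ℝ)) ((j:ℝ)/(m.factorial:ℝ))
        ((k:ℝ)/(m.factorial:ℝ)) (by positivity)
        ((div_le_div_iff_of_pos_right hN).mpr (by exact_mod_cast hij))
        ((div_le_div_iff_of_pos_right hN).mpr (by exact_mod_cast hjk))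
        ((div_le_one hN).mpr (by exact_mod_cast hk)) v hv
      simpa only [procDelta] using this
    have key := hK m.factorial Ω P (fun j => ξ ((j:ℝ)/(m.factorial:ℝ)))
      (fun j => G ((j:ℝ)/(m.factorial:ℝ))) hw H u hu
    rw [Nat.cast_zero, zero_div, div_self hN.ne'] at key
    exact key
  rw [hEq, hmono.directed_le.measure_iUnion]
  refine iSup_le fun m => le_trans (hbound m) (le_of_eq ?_)
  congr 1
  ring
end

section
/- Let (ξ_t)_{t∈[0,1]} be a family of real-valued random variables on a probability space (Ω, 𝓕, P), let b ∈ (2, ∞], and suppose ν(p) := sup over all 0 ≤ r ≤ s ≤ t ≤ 1 of (E|δ[ξ](r,s,t)|^p)^{1/p} is finite for every p ∈ [2, b). Let G : [0,1] → ℝ be a continuous increasing function with G(0) = 0 such that for all 0 ≤ r ≤ s ≤ t ≤ 1 and all p ∈ [2, b): (E|δ[ξ](r,s,t)|^p)^{1/p} ≤ (G(t) − G(r)) · ν(p). Then for every p ∈ [2, b) there exists a finite constant K_p, depending only on p, such that for all u > 0 and all h ∈ (0,1]: P(κ[ξ](h) > u) ≤ 2 · K_p · u^{−p} · ν(p)^p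 · (G(1) − G(0))^p · (ω[G](2h))^{p−1}. In particular, for every ε > 0, P(κ[ξ](h) > ε) → 0 as h → 0⁺. -/
open MeasureTheory Set Filter ENNReal

/-- The event `{κ[ξ](h) > u}`, where `κ[ξ](h)` is the Prokhorov–Skorokhod modulus: the
supremum of `min(|ξ_t - ξ_{t₁}|, |ξ_{t₂} - ξ_t|)` over all rational triples
`0 ≤ t₁ ≤ t ≤ t₂ ≤ min(t₁ + h, 1)`; the supremum exceeds `u` iff some triple does. -/
def KappaGt {Ω : Type*} (ξ : ℝ → Ω → ℝ) (h u : ℝ) : Set Ω :=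
  {ω | ∃ t₁ t t₂ : ℚ, 0 ≤ (t₁ : ℝ) ∧ (t₁ : ℝ) ≤ (t : ℝ) ∧ (t : ℝ) ≤ (t₂ : ℝ) ∧
    (t₂ : ℝ) ≤ (t₁ : ℝ) + h ∧ (t₂ : ℝ) ≤ 1 ∧
    u < min |ξ t ω - ξ t₁ ω| |ξ t₂ ω - ξ t ω|}

/-- `ω[G](h)`, the ordinary modulus of continuity of `G : [0,1] → ℝ`. -/
noncomputable def contModulus (G : ℝ → ℝ) (h : ℝ) : ℝ :=
  sSup {x : ℝ | ∃ r t : ℝ, r ∈ Icc (0 : ℝ) 1 ∧ t ∈ Icc (0 : ℝ) 1 ∧ |r - t| ≤ h ∧ x = |G t - G r|}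

/-- `(E |δ[ξ](r,s,t)|^p)^{1/p}`, as an extended nonnegative real. -/
noncomputable def tripleMoment {Ω : Type*} [MeasurableSpace Ω] (P : Measure Ω)
    (ξ : ℝ → Ω → ℝ) (p r s t : ℝ) : ℝ≥0∞ :=
  (∫⁻ ω, ENNReal.ofReal (procDelta ξ r s t ω ^ p) ∂P) ^ (1 / p)

/-- `ν(p)`: the supremum over all triples `0 ≤ r ≤ s ≤ t ≤ 1` of `(E |δ[ξ](r,s,t)|^p)^{1/p}`. -/
noncomputable def nuFun {Ω : Type*} [MeasurableSpace Ω] (P : Measure Ω)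
    (ξ : ℝ → Ω → ℝ) (p : ℝ) : ℝ≥0∞ :=
  ⨆ (r : ℝ) (s : ℝ) (t : ℝ) (_ : 0 ≤ r ∧ r ≤ s ∧ s ≤ t ∧ t ≤ 1), tripleMoment P ξ p r s t


set_option maxHeartbeats 1000000

namespace Prop42

open scoped Classical

/-- numeric snapping lemma -/
lemma snap3 {vx vy vz w1 w2 w3 M D : ℝ}
    (h1 : |vx - w1| ≤ M) (h2 : |vy - w2| ≤ M) (h3 : |vz - w3| ≤ M)
    (hD : min |w2 - w1| |w3 - w2| ≤ D) :
    min |vy - vx| |vz - vy| ≤ 3 * M + D := by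
  have hM : 0 ≤ M := le_trans (abs_nonneg _) h1
  rcases le_total |w2 - w1| |w3 - w2| with h | h
  · have hb : |vy - vx| ≤ |w2 - w1| + 2 * M := by
      have e : vy - vx = (w2 - w1) + ((vy - w2) - (vx - w1)) := by ring
      calc |vy - vx| ≤ |w2 - w1| + |(vy - w2) - (vx - w1)| := by rw [e]; exact abs_add_le _ _
        _ ≤ |w2 - w1| + (|vy - w2| + |vx - w1|) := by linarith [abs_sub (vy - w2) (vx - w1)]
        _ ≤ |w2 - w1| + 2 * M := by linarith
    have hDD : |w2 - w1| ≤ D := by rw [min_eq_left h] at hD; exact hD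
    calc min |vy - vx| |vz - vy| ≤ |vy - vx| := min_le_left _ _
      _ ≤ 3 * M + D := by linarith
  · have hb : |vz - vy| ≤ |w3 - w2| + 2 * M := by
      have e : vz - vy = (w3 - w2) + ((vz - w3) - (vy - w2)) := by ring
      calc |vz - vy| ≤ |w3 - w2| + |(vz - w3) - (vy - w2)| := by rw [e]; exact abs_add_le _ _
        _ ≤ |w3 - w2| + (|vz - w3| + |vy - w2|) := by linarith [abs_sub (vz - w3) (vy - w2)]
        _ ≤ |w3 - w2| + 2 * M := by linarith
    have hDD : |w3 - w2| ≤ D := by rw [min_eq_right h] at hD; exact hD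
    calc min |vy - vx| |vz - vy| ≤ |vz - vy| := min_le_right _ _
      _ ≤ 3 * M + D := by linarith

lemma telescope (f : ℕ → ℝ) (n : ℕ) :
    ∑ i ∈ Finset.range n, (f (i + 2) - f i) = f (n + 1) + f n - f 1 - f 0 := by
  induction n with
  | zero => simp
  | succ m ih => rw [Finset.sum_range_succ, ih]; ring

lemma tau_mono {τ : ℕ → ℝ} {k : ℕ} (hm : ∀ i, i < k → τ i ≤ τ (i + 1)) :
    ∀ j, j ≤ k → ∀ i, i ≤ j → τ i ≤ τ j := by
  intro j
  induction j with
  | zero => intro _ i hi; simp [Nat.le_zero.mp hi]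
  | succ n ih =>
    intro hj i hi
    rcases Nat.lt_or_ge i (n + 1) with h | h
    · exact le_trans (ih (by omega) i (by omega)) (hm n (by omega))
    · have : i = n + 1 := by omega
      simp [this]

noncomputable def childIdx (τ : ℕ → ℝ) (k : ℕ) (x : ℝ) : ℕ :=
  Nat.findGreatest (fun i => τ i ≤ x) (k - 1)

lemma childIdx_lt {τ : ℕ → ℝ} {k : ℕ} (hk : 0 < k) (x : ℝ) : childIdx τ k x < k := by
  have := Nat.findGreatest_le (P := fun i => τ i ≤ x) (n := k - 1)
  unfold childIdx; omega

lemma childIdx_le_x {τ : ℕ → ℝ} {k : ℕ} {x : ℝ} (h0 : τ 0 ≤ x) :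
    τ (childIdx τ k x) ≤ x :=
  Nat.findGreatest_spec (P := fun i => τ i ≤ x) (Nat.zero_le _) h0

lemma x_le_childIdx {τ : ℕ → ℝ} {k : ℕ} {x : ℝ} (hk : 0 < k) (hx : x ≤ τ k) :
    x ≤ τ (childIdx τ k x + 1) := by
  by_cases hc : childIdx τ k x = k - 1
  · rw [hc]
    have : k - 1 + 1 = k := by omega
    rw [this]; exact hx
  · have he : childIdx τ k x = Nat.findGreatest (fun i => τ i ≤ x) (k - 1) := rfl
    have hle : childIdx τ k x ≤ k - 1 := by rw [he]; exact Nat.findGreatest_le (P := fun i => τ i ≤ x) (n := k - 1)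
    have hlt : childIdx τ k x + 1 ≤ k - 1 := by omega
    have := Nat.findGreatest_is_greatest (P := fun i => τ i ≤ x)
      (k := childIdx τ k x + 1) (by omega) hlt
    exact le_of_not_ge this

lemma childIdx_mono {τ : ℕ → ℝ} {k : ℕ} {x y : ℝ} (hxy : x ≤ y) :
    childIdx τ k x ≤ childIdx τ k y :=
  Nat.findGreatest_mono (fun _ hn => le_trans hn hxy) le_rfl

/-- grid existence -/
lemma exists_grid {G : ℝ → ℝ} (hGc : ContinuousOn G (Icc 0 1)) (hGm : StrictMonoOn G (Icc 0 1))
    {A B : ℝ} (hA : 0 ≤ A) (hAB : A ≤ B) (hB : B ≤ 1) (k : ℕ) (hk : 0 < k) :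
    ∃ τ : ℕ → ℝ, τ 0 = A ∧ τ k = B ∧ (∀ i, i ≤ k → τ i ∈ Icc A B) ∧
      (∀ i, i < k → τ i ≤ τ (i + 1)) ∧
      (∀ i, i < k → G (τ (i + 1)) - G (τ i) = (G B - G A) / k) := by
  have hsub : Icc A B ⊆ Icc (0 : ℝ) 1 := Icc_subset_Icc hA hB
  have hmemA : A ∈ Icc (0:ℝ) 1 := ⟨hA, le_trans hAB hB⟩
  have hmemB : B ∈ Icc (0:ℝ) 1 := ⟨le_trans hA hAB, hB⟩
  have hGAB : G A ≤ G B := by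
    rcases eq_or_lt_of_le hAB with h | h
    · rw [h]
    · exact le_of_lt (hGm hmemA hmemB h)
  set d : ℝ := (G B - G A) / k with hd
  have hdnn : 0 ≤ d := div_nonneg (by linarith) (Nat.cast_nonneg k)
  have hkne : (k : ℝ) ≠ 0 := Nat.cast_ne_zero.2 (by omega)
  have hkd : (k : ℝ) * d = G B - G A := by
    rw [hd]; field_simp
  have key : ∀ i : ℕ, ∃ x : ℝ, i ≤ k → x ∈ Icc A B ∧ G x = G A + i * d := by
    intro i
    by_cases hi : i ≤ k
    · have hm : G A + i * d ∈ Icc (G A) (G B) := by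
        constructor
        · nlinarith [Nat.cast_nonneg (α := ℝ) i]
        · have h1 : (i : ℝ) ≤ k := Nat.cast_le.2 hi
          nlinarith
      obtain ⟨x, hx, hGx⟩ := intermediate_value_Icc hAB (hGc.mono hsub) hm
      exact ⟨x, fun _ => ⟨hx, hGx⟩⟩
    · exact ⟨A, fun h => absurd h hi⟩
  choose f hf using key
  set τ : ℕ → ℝ := fun i => if i = 0 then A else if k ≤ i then B else f i with hτ
  have hmem : ∀ i, i ≤ k → τ i ∈ Icc A B := by
    intro i hi
    by_cases h0 : i = 0
    · rw [hτ]; simp only [h0, if_pos rfl]; exact ⟨le_rfl, hAB⟩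
    · by_cases hki : k ≤ i
      · rw [hτ]; simp only [if_neg h0, if_pos hki]; exact ⟨hAB, le_rfl⟩
      · rw [hτ]; simp only [if_neg h0, if_neg hki]; exact (hf i hi).1
  have hGv : ∀ i, i ≤ k → G (τ i) = G A + i * d := by
    intro i hi
    by_cases h0 : i = 0
    · rw [hτ]; simp [h0]
    · by_cases hki : k ≤ i
      · have hik : i = k := by omega
        subst hik
        rw [hτ]; simp only [if_neg h0, le_refl, if_pos]
        linarith [hkd]
      · rw [hτ]; simp only [if_neg h0, if_neg hki]; exact (hf i hi).2
  have hstep : ∀ i, i < k → τ i ≤ τ (i + 1) := by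
    intro i hi
    have h1 : G (τ i) ≤ G (τ (i + 1)) := by
      rw [hGv i (by omega), hGv (i + 1) (by omega)]
      push_cast; nlinarith
    by_contra hlt
    push_neg at hlt
    have := hGm (hsub (hmem (i+1) (by omega))) (hsub (hmem i (by omega))) hlt
    linarith
  refine ⟨τ, by rw [hτ]; simp, ?_, hmem, hstep, ?_⟩
  · rw [hτ]; simp [hk.ne']
  · intro i hi
    rw [hGv i (by omega), hGv (i + 1) (by omega)]
    push_cast; ring


variable {Ω : Type} [MeasurableSpace Ω]

lemma delta_meas (ξ : ℝ → Ω → ℝ) (hξ : ∀ t, Measurable (ξ t)) (r s t : ℝ) :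
    Measurable (procDelta ξ r s t) :=
  (((hξ s).sub (hξ r)).abs).min (((hξ t).sub (hξ s)).abs)

omit [MeasurableSpace Ω] in
lemma delta_nonneg {ξ : ℝ → Ω → ℝ} {r s t : ℝ} (ω : Ω) : 0 ≤ procDelta ξ r s t ω :=
  le_min (abs_nonneg _) (abs_nonneg _)

/-- Chebyshev–Markov for the triple increments. -/
lemma markov {P : Measure Ω} {ξ : ℝ → Ω → ℝ} (hξ : ∀ t, Measurable (ξ t))
    {p : ℝ} (hp : 0 < p) {r s t c l : ℝ} (hc : 0 ≤ c)
    (hmom : tripleMoment P ξ p r s t ≤ ENNReal.ofReal c) (hl : 0 < l) :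
    P {ω | l < procDelta ξ r s t ω} ≤ ENNReal.ofReal (l ^ (-p) * c ^ p) := by
  have hmeas : Measurable (fun ω => ENNReal.ofReal (procDelta ξ r s t ω ^ p)) :=
    (((delta_meas ξ hξ r s t).pow measurable_const)).ennreal_ofReal
  have hsub : {ω | l < procDelta ξ r s t ω} ⊆
      {ω | ENNReal.ofReal (l ^ p) ≤ ENNReal.ofReal (procDelta ξ r s t ω ^ p)} := by
    intro ω hω
    exact ENNReal.ofReal_le_ofReal
      (Real.rpow_le_rpow hl.le (le_of_lt hω) hp.le)
  have key : ENNReal.ofReal (l ^ p) * P {ω | l < procDelta ξ r s t ω} ≤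
      ∫⁻ ω, ENNReal.ofReal (procDelta ξ r s t ω ^ p) ∂P :=
    le_trans (mul_le_mul_right (measure_mono hsub) _)
      (mul_meas_ge_le_lintegral₀ hmeas.aemeasurable _)
  have hint : ∫⁻ ω, ENNReal.ofReal (procDelta ξ r s t ω ^ p) ∂P ≤ ENNReal.ofReal (c ^ p) := by
    have h1 := ENNReal.rpow_le_rpow hmom hp.le
    rw [ENNReal.ofReal_rpow_of_nonneg hc hp.le] at h1
    have h2 : (tripleMoment P ξ p r s t) ^ p =
        ∫⁻ ω, ENNReal.ofReal (procDelta ξ r s t ω ^ p) ∂P := by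
      rw [tripleMoment, ← ENNReal.rpow_mul, one_div, inv_mul_cancel₀ hp.ne', ENNReal.rpow_one]
    rwa [h2] at h1
  have hlp : (0:ℝ) < l ^ p := Real.rpow_pos_of_pos hl p
  have h0 : ENNReal.ofReal (l ^ p) ≠ 0 := by
    simp [ENNReal.ofReal_eq_zero, not_le, hlp]
  have htop : ENNReal.ofReal (l ^ p) ≠ ⊤ := ENNReal.ofReal_ne_top
  calc P {ω | l < procDelta ξ r s t ω}
      = (ENNReal.ofReal (l ^ p))⁻¹ * (ENNReal.ofReal (l ^ p) * P {ω | l < procDelta ξ r s t ω}) := by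
        rw [← mul_assoc, ENNReal.inv_mul_cancel h0 htop, one_mul]
    _ ≤ (ENNReal.ofReal (l ^ p))⁻¹ * ENNReal.ofReal (c ^ p) :=
        mul_le_mul_right (key.trans hint) _
    _ = ENNReal.ofReal (l ^ (-p) * c ^ p) := by
        rw [← ENNReal.ofReal_inv_of_pos hlp, ← ENNReal.ofReal_mul (by positivity),
          Real.rpow_neg hl.le]

/-- the event that some ordered triple from `S` has `δ > l`. -/
def Ev (ξ : ℝ → Ω → ℝ) (S : Finset ℝ) (l : ℝ) : Set Ω :=
  {ω | ∃ x ∈ S, ∃ y ∈ S, ∃ z ∈ S, x ≤ y ∧ y ≤ z ∧ l < procDelta ξ x y z ω}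


/-- the child finsets -/
noncomputable def childSet (S : Finset ℝ) (τ : ℕ → ℝ) (i : ℕ) : Finset ℝ :=
  (S.filter (fun x => x ∈ Icc (τ i) (τ (i + 1)))) ∪ {τ i, τ (i + 1)}

omit [MeasurableSpace Ω] in
lemma step_incl (ξ : ℝ → Ω → ℝ) (S : Finset ℝ) {A B : ℝ}
    (hS : ∀ x ∈ S, x ∈ Icc A B) (τ : ℕ → ℝ) (hτ0 : τ 0 = A) (hτk : τ 25 = B)
    (hmono : ∀ i, i < 25 → τ i ≤ τ (i + 1)) {l : ℝ} (hl : 0 < l) :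
    Ev ξ S l ⊆ (⋃ i : Fin 25, Ev ξ (childSet S τ i) (3 / 10 * l)) ∪
      ⋃ g : Fin 26 × Fin 26 × Fin 26, {ω | τ (g.1 : ℕ) ≤ τ (g.2.1 : ℕ) ∧
        τ (g.2.1 : ℕ) ≤ τ (g.2.2 : ℕ) ∧
        1 / 10 * l < procDelta ξ (τ (g.1 : ℕ)) (τ (g.2.1 : ℕ)) (τ (g.2.2 : ℕ)) ω} := by
  intro ω hω
  obtain ⟨x, hxS, y, hyS, z, hzS, hxy, hyz, hδ⟩ := hω
  by_contra hcon
  simp only [Set.mem_union, Set.mem_iUnion, not_or, not_exists] at hcon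
  obtain ⟨hchild, hgrid⟩ := hcon
  have HC : ∀ i : ℕ, i < 25 → ∀ x' y' z' : ℝ,
      (x' ∈ S ∧ x' ∈ Icc (τ i) (τ (i + 1)) ∨ x' = τ i ∨ x' = τ (i + 1)) →
      (y' ∈ S ∧ y' ∈ Icc (τ i) (τ (i + 1)) ∨ y' = τ i ∨ y' = τ (i + 1)) →
      (z' ∈ S ∧ z' ∈ Icc (τ i) (τ (i + 1)) ∨ z' = τ i ∨ z' = τ (i + 1)) →
      x' ≤ y' → y' ≤ z' → procDelta ξ x' y' z' ω ≤ 3 / 10 * l := by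
    intro i hi x' y' z' hx' hy' hz' h1 h2
    by_contra hgt
    push_neg at hgt
    apply hchild ⟨i, hi⟩
    have hmem : ∀ w : ℝ, (w ∈ S ∧ w ∈ Icc (τ i) (τ (i + 1)) ∨ w = τ i ∨ w = τ (i + 1)) →
        w ∈ childSet S τ i := by
      intro w hw
      simp only [childSet, Finset.mem_union, Finset.mem_filter, Finset.mem_insert,
        Finset.mem_singleton]
      tauto
    exact ⟨x', hmem _ hx', y', hmem _ hy', z', hmem _ hz', h1, h2, hgt⟩
  have HG : ∀ g1 g2 g3 : ℕ, g1 ≤ 25 → g2 ≤ 25 → g3 ≤ 25 → τ g1 ≤ τ g2 → τ g2 ≤ τ g3 →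
      procDelta ξ (τ g1) (τ g2) (τ g3) ω ≤ 1 / 10 * l := by
    intro g1 g2 g3 hg1 hg2 hg3 h1 h2
    by_contra hgt
    push_neg at hgt
    exact hgrid (⟨g1, by omega⟩, ⟨g2, by omega⟩, ⟨g3, by omega⟩) ⟨h1, h2, hgt⟩
  set v : ℝ → ℝ := fun w => ξ w ω with hv
  have hτA : τ 0 ≤ x := by rw [hτ0]; exact (hS x hxS).1
  have hz25 : z ≤ τ 25 := by rw [hτk]; exact (hS z hzS).2
  have hx25 : x ≤ τ 25 := le_trans (le_trans hxy hyz) hz25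
  have hy25 : y ≤ τ 25 := le_trans hyz hz25
  have hτAy : τ 0 ≤ y := le_trans hτA hxy
  have hτAz : τ 0 ≤ z := le_trans hτAy hyz
  set a := childIdx τ 25 x with hadef
  set b := childIdx τ 25 y with hbdef
  set c := childIdx τ 25 z with hcdef
  have ha : a < 25 := childIdx_lt (by norm_num) x
  have hb : b < 25 := childIdx_lt (by norm_num) y
  have hc : c < 25 := childIdx_lt (by norm_num) z
  have hax : τ a ≤ x := childIdx_le_x hτA
  have hxa : x ≤ τ (a + 1) := x_le_childIdx (by norm_num) hx25
  have hby : τ b ≤ y := childIdx_le_x hτAy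
  have hyb : y ≤ τ (b + 1) := x_le_childIdx (by norm_num) hy25
  have hcz : τ c ≤ z := childIdx_le_x hτAz
  have hzc : z ≤ τ (c + 1) := x_le_childIdx (by norm_num) hz25
  have hab : a ≤ b := childIdx_mono hxy
  have hbc : b ≤ c := childIdx_mono hyz
  have hδ' : l < min |v y - v x| |v z - v y| := hδ
  -- snapping of a generic point of S
  have hM : ∀ w, w ∈ S → ∃ j : ℕ,
      (j = childIdx τ 25 w ∨ j = childIdx τ 25 w + 1) ∧ |v w - v (τ j)| ≤ 3 / 10 * l := by
    intro w hw
    have h0w : τ 0 ≤ w := by rw [hτ0]; exact (hS w hw).1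
    have hw25 : w ≤ τ 25 := by rw [hτk]; exact (hS w hw).2
    have hi : childIdx τ 25 w < 25 := childIdx_lt (by norm_num) w
    have h1 : τ (childIdx τ 25 w) ≤ w := childIdx_le_x h0w
    have h2 : w ≤ τ (childIdx τ 25 w + 1) := x_le_childIdx (by norm_num) hw25
    have hcc := HC (childIdx τ 25 w) hi (τ (childIdx τ 25 w)) w (τ (childIdx τ 25 w + 1))
      (Or.inr (Or.inl rfl)) (Or.inl ⟨hw, h1, h2⟩) (Or.inr (Or.inr rfl)) h1 h2
    rcases min_le_iff.mp hcc with h | h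
    · exact ⟨childIdx τ 25 w, Or.inl rfl, h⟩
    · exact ⟨childIdx τ 25 w + 1, Or.inr rfl, by rw [abs_sub_comm] at h; exact h⟩
  -- the common final contradiction
  have final : ∀ g1 g2 g3 : ℕ, g1 ≤ 25 → g2 ≤ 25 → g3 ≤ 25 → g1 ≤ g2 → g2 ≤ g3 →
      |v x - v (τ g1)| ≤ 3 / 10 * l → |v y - v (τ g2)| ≤ 3 / 10 * l →
      |v z - v (τ g3)| ≤ 3 / 10 * l → False := by
    intro g1 g2 g3 hg1 hg2 hg3 h12 h23 he1 he2 he3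
    have ht12 : τ g1 ≤ τ g2 := tau_mono hmono g2 hg2 g1 h12
    have ht23 : τ g2 ≤ τ g3 := tau_mono hmono g3 hg3 g2 h23
    have hD := HG g1 g2 g3 hg1 hg2 hg3 ht12 ht23
    have := snap3 he1 he2 he3 hD
    have hlt : l < 3 * (3 / 10 * l) + 1 / 10 * l := lt_of_lt_of_le hδ' this
    linarith
  by_cases hac : a = c
  · -- all three in child a
    have hba : b = a := by omega
    have := HC a ha x y z (Or.inl ⟨hxS, hax, hxa⟩)
      (Or.inl ⟨hyS, by rw [← hba]; exact hby, by rw [← hba]; exact hyb⟩)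
      (Or.inl ⟨hzS, by rw [hac]; exact hcz, by rw [hac]; exact hzc⟩)
      hxy hyz
    have : l < 3 / 10 * l := lt_of_lt_of_le hδ this
    linarith
  · have hac' : a < c := by omega
    obtain ⟨g1, hg1d, he1⟩ := hM x hxS
    obtain ⟨g3, hg3d, he3⟩ := hM z hzS
    rw [← hadef] at hg1d
    rw [← hcdef] at hg3d
    by_cases hab' : a = b
    · -- x, y in child b, y snaps right or δ small
      have hbc' : b < c := by omega
      have hcc := HC b hb x y (τ (b + 1))
        (Or.inl ⟨hxS, by rw [← hab']; exact hax, by rw [← hab']; exact hxa⟩)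
        (Or.inl ⟨hyS, hby, hyb⟩) (Or.inr (Or.inr rfl)) hxy hyb
      rcases min_le_iff.mp hcc with h | h
      · have : l < 3 / 10 * l := lt_of_lt_of_le (lt_of_lt_of_le hδ' (min_le_left _ _)) h
        linarith
      · rw [abs_sub_comm] at h
        exact final g1 (b + 1) g3 (by omega) (by omega) (by omega) (by omega) (by omega)
          he1 h he3
    · by_cases hbc'' : b = c
      · -- y, z in child b, y snaps left or δ small
        have hab'' : a < b := by omega
        have hcc := HC b hb (τ b) y z (Or.inr (Or.inl rfl)) (Or.inl ⟨hyS, hby, hyb⟩)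
          (Or.inl ⟨hzS, by rw [hbc'']; exact hcz, by rw [hbc'']; exact hzc⟩) hby hyz
        rcases min_le_iff.mp hcc with h | h
        · exact final g1 b g3 (by omega) (by omega) (by omega) (by omega) (by omega)
            he1 h he3
        · have : l < 3 / 10 * l := lt_of_lt_of_le (lt_of_lt_of_le hδ' (min_le_right _ _)) h
          linarith
      · -- a < b < c, snap y freely
        obtain ⟨g2, hg2d, he2⟩ := hM y hyS
        rw [← hbdef] at hg2d
        exact final g1 g2 g3 (by omega) (by omega) (by omega) (by omega) (by omega)
          he1 he2 he3


lemma maximal_N (P : Measure Ω) (ξ : ℝ → Ω → ℝ) (hξ : ∀ t, Measurable (ξ t))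
    (G : ℝ → ℝ) (hGc : ContinuousOn G (Icc 0 1)) (hGm : StrictMonoOn G (Icc 0 1))
    {p : ℝ} (hp2 : 2 ≤ p) (hnu : nuFun P ξ p ≠ ⊤)
    (hmom : ∀ r s t : ℝ, 0 ≤ r → r ≤ s → s ≤ t → t ≤ 1 →
      tripleMoment P ξ p r s t ≤ ENNReal.ofReal (G t - G r) * nuFun P ξ p)
    (N : ℕ) :
    ∀ A B : ℝ, 0 ≤ A → A ≤ B → B ≤ 1 → ∀ S : Finset ℝ, (∀ x ∈ S, x ∈ Icc A B) →
    ∀ l : ℝ, 0 < l →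
    P (Ev ξ S l) ≤ ENNReal.ofReal
      ((26 ^ 3 * 10 ^ p * ∑ n ∈ Finset.range N, (25 * (15 / 2 : ℝ) ^ (-p)) ^ n
        + ((S.card + 2 * N : ℕ) : ℝ) ^ 3 * (25 * (15 / 2 : ℝ) ^ (-p)) ^ N)
        * (l ^ (-p) * ((G B - G A) * (nuFun P ξ p).toReal) ^ p)) := by
  have hGmono : MonotoneOn G (Icc 0 1) := hGm.monotoneOn
  set ν : ℝ := (nuFun P ξ p).toReal with hνdef
  have hν : (0:ℝ) ≤ ν := ENNReal.toReal_nonneg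
  have hp : (0:ℝ) < p := by linarith
  have triple_bound : ∀ A B : ℝ, 0 ≤ A → A ≤ B → B ≤ 1 → ∀ r s t : ℝ,
      r ∈ Icc A B → s ∈ Icc A B → t ∈ Icc A B → r ≤ s → s ≤ t → ∀ l : ℝ, 0 < l →
      P {ω | l < procDelta ξ r s t ω} ≤
        ENNReal.ofReal (l ^ (-p) * ((G B - G A) * ν) ^ p) := by
    intro A B hA hAB hB r s t hr hs ht hrs hst l hl
    have hA1 : A ∈ Icc (0:ℝ) 1 := ⟨hA, le_trans hAB hB⟩
    have hB1 : B ∈ Icc (0:ℝ) 1 := ⟨le_trans hA hAB, hB⟩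
    have hr1 : r ∈ Icc (0:ℝ) 1 := ⟨le_trans hA hr.1, le_trans hr.2 hB⟩
    have ht1 : t ∈ Icc (0:ℝ) 1 := ⟨le_trans hA ht.1, le_trans ht.2 hB⟩
    have hGBA : 0 ≤ G B - G A := by
      have := hGmono hA1 hB1 hAB; linarith
    have hGrt : G t - G r ≤ G B - G A := by
      have h1 : G A ≤ G r := hGmono hA1 hr1 hr.1
      have h2 : G t ≤ G B := hGmono ht1 hB1 ht.2
      linarith
    have hGtr : 0 ≤ G t - G r := by
      have := hGmono hr1 ht1 (le_trans hrs hst); linarith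
    have hnuν : nuFun P ξ p = ENNReal.ofReal ν := (ENNReal.ofReal_toReal hnu).symm
    have hmm2 : tripleMoment P ξ p r s t ≤ ENNReal.ofReal ((G B - G A) * ν) := by
      calc tripleMoment P ξ p r s t
          ≤ ENNReal.ofReal (G t - G r) * nuFun P ξ p :=
            hmom r s t (le_trans hA hr.1) hrs hst (le_trans ht.2 hB)
        _ = ENNReal.ofReal ((G t - G r) * ν) := by
            rw [hnuν, ← ENNReal.ofReal_mul hGtr]
        _ ≤ ENNReal.ofReal ((G B - G A) * ν) :=
            ENNReal.ofReal_le_ofReal (by nlinarith)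
    exact markov hξ hp (mul_nonneg hGBA hν) hmm2 hl
  set s : ℝ := 25 * (15 / 2 : ℝ) ^ (-p) with hsdef
  have hs0 : 0 ≤ s := by positivity
  induction N with
  | zero =>
    intro A B hA hAB hB S hS l hl
    simp only [Finset.range_zero, Finset.sum_empty, mul_zero, zero_add, Nat.mul_zero,
      Nat.add_zero, pow_zero, mul_one]
    have hsub : Ev ξ S l ⊆ ⋃ x ∈ S, ⋃ y ∈ S, ⋃ z ∈ S,
        {ω | x ≤ y ∧ y ≤ z ∧ l < procDelta ξ x y z ω} := by
      rintro ω ⟨x, hx, y, hy, z, hz, h1, h2, h3⟩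
      exact Set.mem_biUnion hx (Set.mem_biUnion hy (Set.mem_biUnion hz ⟨h1, h2, h3⟩))
    have hterm : ∀ x ∈ S, ∀ y ∈ S, ∀ z ∈ S,
        P {ω | x ≤ y ∧ y ≤ z ∧ l < procDelta ξ x y z ω} ≤
          ENNReal.ofReal (l ^ (-p) * ((G B - G A) * ν) ^ p) := by
      intro x hx y hy z hz
      by_cases hord : x ≤ y ∧ y ≤ z
      · refine le_trans (measure_mono ?_) (triple_bound A B hA hAB hB x y z
          (hS x hx) (hS y hy) (hS z hz) hord.1 hord.2 l hl)
        intro ω hω; exact hω.2.2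
      · have : {ω : Ω | x ≤ y ∧ y ≤ z ∧ l < procDelta ξ x y z ω} = ∅ := by
          ext ω; simp only [Set.mem_setOf_eq, Set.mem_empty_iff_false, iff_false]
          tauto
        rw [this, measure_empty]; exact zero_le
    calc P (Ev ξ S l)
        ≤ ∑ x ∈ S, ∑ y ∈ S, ∑ z ∈ S, P {ω | x ≤ y ∧ y ≤ z ∧ l < procDelta ξ x y z ω} := by
          refine le_trans (measure_mono hsub) ?_
          refine le_trans (measure_biUnion_finset_le _ _) (Finset.sum_le_sum fun x _ => ?_)
          refine le_trans (measure_biUnion_finset_le _ _) (Finset.sum_le_sum fun y _ => ?_)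
          exact measure_biUnion_finset_le _ _
      _ ≤ ∑ x ∈ S, ∑ y ∈ S, ∑ z ∈ S, ENNReal.ofReal (l ^ (-p) * ((G B - G A) * ν) ^ p) := by
          refine Finset.sum_le_sum fun x hx => Finset.sum_le_sum fun y hy =>
            Finset.sum_le_sum fun z hz => hterm x hx y hy z hz
      _ = (S.card * (S.card * S.card)) • ENNReal.ofReal (l ^ (-p) * ((G B - G A) * ν) ^ p) := by
          simp [Finset.sum_const, smul_smul, mul_assoc]
      _ ≤ ENNReal.ofReal ((S.card : ℝ) ^ 3 * (l ^ (-p) * ((G B - G A) * ν) ^ p)) := by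
          rw [nsmul_eq_mul]
          rw [show ((S.card * (S.card * S.card) : ℕ) : ℝ≥0∞)
              = ENNReal.ofReal ((S.card * (S.card * S.card) : ℕ) : ℝ) by
            rw [ENNReal.ofReal_natCast]]
          rw [← ENNReal.ofReal_mul (by positivity)]
          apply ENNReal.ofReal_le_ofReal
          have : ((S.card * (S.card * S.card) : ℕ) : ℝ) = (S.card : ℝ) ^ 3 := by
            push_cast; ring
          rw [this]
  | succ N ih =>
    intro A B hA hAB hB S hS l hl
    obtain ⟨τ, hτ0, hτk, hτmem, hτstep, hτmass⟩ :=
      exists_grid hGc hGm hA hAB hB 25 (by norm_num)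
    have hGBA : 0 ≤ G B - G A := by
      have := hGmono ⟨hA, le_trans hAB hB⟩ ⟨le_trans hA hAB, hB⟩ hAB; linarith
    set X : ℝ := l ^ (-p) * ((G B - G A) * ν) ^ p with hXdef
    have hX0 : 0 ≤ X := mul_nonneg (Real.rpow_nonneg hl.le _)
      (Real.rpow_nonneg (mul_nonneg hGBA hν) _)
    set CN : ℝ := 26 ^ 3 * 10 ^ p * ∑ n ∈ Finset.range N, s ^ n
      + ((S.card + 2 * (N + 1) : ℕ) : ℝ) ^ 3 * s ^ N with hCNdef
    have hCN0 : 0 ≤ CN := by positivity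
    -- child bound
    have child_bound : ∀ i : Fin 25,
        P (Ev ξ (childSet S τ i) (3 / 10 * l)) ≤
          ENNReal.ofReal (CN * ((3 / 10 : ℝ) ^ (-p) * (1 / 25 : ℝ) ^ p) * X) := by
      intro i
      have hi25 : (i : ℕ) < 25 := i.isLt
      have hAi : 0 ≤ τ i := le_trans hA (hτmem i (by omega)).1
      have hABi : τ i ≤ τ (i + 1) := hτstep i hi25
      have hBi : τ ((i : ℕ) + 1) ≤ 1 := le_trans (hτmem ((i : ℕ) + 1) (by omega)).2 hB
      have hSi : ∀ x ∈ childSet S τ i, x ∈ Icc (τ i) (τ ((i : ℕ) + 1)) := by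
        intro x hx
        simp only [childSet, Finset.mem_union, Finset.mem_filter, Finset.mem_insert,
          Finset.mem_singleton] at hx
        rcases hx with ⟨_, h⟩ | h | h
        · exact h
        · rw [h]; exact ⟨le_rfl, hABi⟩
        · rw [h]; exact ⟨hABi, le_rfl⟩
      have hcard : (childSet S τ i).card ≤ S.card + 2 := by
        refine le_trans (Finset.card_union_le _ _) ?_
        have h1 : (S.filter (fun x => x ∈ Icc (τ i) (τ ((i : ℕ) + 1)))).card ≤ S.card :=
          Finset.card_filter_le _ _
        have h2 : ({τ (i : ℕ), τ ((i : ℕ) + 1)} : Finset ℝ).card ≤ 2 :=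
          le_trans (Finset.card_insert_le _ _) (by simp)
        omega
      have hIH := ih (τ i) (τ ((i : ℕ) + 1)) hAi hABi hBi (childSet S τ i) hSi
        (3 / 10 * l) (by linarith)
      refine le_trans hIH (ENNReal.ofReal_le_ofReal ?_)
      have hmass : G (τ ((i : ℕ) + 1)) - G (τ (i : ℕ)) = (G B - G A) / 25 := by
        have := hτmass i hi25; rw [this]; norm_num
      have hrw : (3 / 10 * l) ^ (-p) * ((G (τ ((i:ℕ)+1)) - G (τ (i:ℕ))) * ν) ^ p
          = ((3 / 10 : ℝ) ^ (-p) * (1 / 25 : ℝ) ^ p) * X := by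
        rw [hmass, hXdef]
        rw [Real.mul_rpow (by norm_num) hl.le]
        rw [show (G B - G A) / 25 * ν = 1 / 25 * ((G B - G A) * ν) by ring]
        rw [Real.mul_rpow (by norm_num) (by positivity)]
        ring
      rw [hrw]
      have hcoef : (26 ^ 3 * 10 ^ p * ∑ n ∈ Finset.range N, s ^ n
          + (((childSet S τ i).card + 2 * N : ℕ) : ℝ) ^ 3 * s ^ N) ≤ CN := by
        rw [hCNdef]
        have h0 : (0:ℝ) ≤ (((childSet S τ i).card + 2 * N : ℕ) : ℝ) := Nat.cast_nonneg _
        have hcast : (((childSet S τ i).card + 2 * N : ℕ) : ℝ)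
            ≤ ((S.card + 2 * (N + 1) : ℕ) : ℝ) := Nat.cast_le.2 (by omega)
        have h3 := pow_le_pow_left₀ h0 hcast 3
        have hsN : (0:ℝ) ≤ s ^ N := by positivity
        have := mul_le_mul_of_nonneg_right h3 hsN
        linarith
      have hpos : (0:ℝ) ≤ ((3 / 10 : ℝ) ^ (-p) * (1 / 25 : ℝ) ^ p) * X :=
        mul_nonneg (by positivity) hX0
      rw [mul_assoc CN]
      calc (26 ^ 3 * 10 ^ p * ∑ n ∈ Finset.range N, s ^ n
            + (((childSet S τ ↑i).card + 2 * N : ℕ) : ℝ) ^ 3 * s ^ N) *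
            ((3 / 10 : ℝ) ^ (-p) * (1 / 25 : ℝ) ^ p * X)
          ≤ CN * ((3 / 10 : ℝ) ^ (-p) * (1 / 25 : ℝ) ^ p * X) :=
            mul_le_mul_of_nonneg_right hcoef hpos
        _ = CN * ((3 / 10 : ℝ) ^ (-p) * (1 / 25 : ℝ) ^ p * X) := rfl
    -- grid bound
    have grid_bound : ∀ g : Fin 26 × Fin 26 × Fin 26,
        P {ω | τ (g.1 : ℕ) ≤ τ (g.2.1 : ℕ) ∧ τ (g.2.1 : ℕ) ≤ τ (g.2.2 : ℕ) ∧
          1 / 10 * l < procDelta ξ (τ (g.1 : ℕ)) (τ (g.2.1 : ℕ)) (τ (g.2.2 : ℕ)) ω} ≤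
          ENNReal.ofReal ((1 / 10 * l) ^ (-p) * ((G B - G A) * ν) ^ p) := by
      intro ⟨g1, g2, g3⟩
      by_cases hord : τ (g1 : ℕ) ≤ τ (g2 : ℕ) ∧ τ (g2 : ℕ) ≤ τ (g3 : ℕ)
      · refine le_trans (measure_mono ?_) (triple_bound A B hA hAB hB _ _ _
          (hτmem _ (by omega)) (hτmem _ (by omega)) (hτmem _ (by omega))
          hord.1 hord.2 (1 / 10 * l) (by linarith))
        intro ω hω; exact hω.2.2
      · have : {ω : Ω | τ (g1 : ℕ) ≤ τ (g2 : ℕ) ∧ τ (g2 : ℕ) ≤ τ (g3 : ℕ) ∧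
            1 / 10 * l < procDelta ξ (τ (g1 : ℕ)) (τ (g2 : ℕ)) (τ (g3 : ℕ)) ω} = ∅ := by
          ext ω; simp only [Set.mem_setOf_eq, Set.mem_empty_iff_false, iff_false]
          tauto
        rw [this, measure_empty]; exact zero_le
    -- assemble
    calc P (Ev ξ S l)
        ≤ P (⋃ i : Fin 25, Ev ξ (childSet S τ i) (3 / 10 * l)) +
          P (⋃ g : Fin 26 × Fin 26 × Fin 26, {ω | τ (g.1 : ℕ) ≤ τ (g.2.1 : ℕ) ∧
            τ (g.2.1 : ℕ) ≤ τ (g.2.2 : ℕ) ∧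
            1 / 10 * l < procDelta ξ (τ (g.1 : ℕ)) (τ (g.2.1 : ℕ)) (τ (g.2.2 : ℕ)) ω}) := by
          refine le_trans (measure_mono (step_incl ξ S hS τ hτ0 hτk hτstep hl)) ?_
          exact measure_union_le _ _
      _ ≤ (∑ _i : Fin 25, ENNReal.ofReal (CN * ((3 / 10 : ℝ) ^ (-p) * (1 / 25 : ℝ) ^ p) * X))
          + ∑ _g : Fin 26 × Fin 26 × Fin 26,
            ENNReal.ofReal ((1 / 10 * l) ^ (-p) * ((G B - G A) * ν) ^ p) := by
          refine add_le_add ?_ ?_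
          · refine le_trans (measure_iUnion_le _) ?_
            rw [tsum_fintype]
            exact Finset.sum_le_sum fun i _ => child_bound i
          · refine le_trans (measure_iUnion_le _) ?_
            rw [tsum_fintype]
            exact Finset.sum_le_sum fun g _ => grid_bound g
      _ ≤ ENNReal.ofReal (25 * (CN * ((3 / 10 : ℝ) ^ (-p) * (1 / 25 : ℝ) ^ p) * X))
          + ENNReal.ofReal (17576 * ((1 / 10 * l) ^ (-p) * ((G B - G A) * ν) ^ p)) := by
          have hA1 : (0:ℝ) ≤ CN * ((3 / 10 : ℝ) ^ (-p) * (1 / 25 : ℝ) ^ p) * X :=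
            mul_nonneg (mul_nonneg hCN0 (by positivity)) hX0
          have hB1 : (0:ℝ) ≤ (1 / 10 * l) ^ (-p) * ((G B - G A) * ν) ^ p :=
            mul_nonneg (Real.rpow_nonneg (by linarith) _)
              (Real.rpow_nonneg (mul_nonneg hGBA hν) _)
          refine add_le_add ?_ ?_
          · rw [Finset.sum_const, Finset.card_univ, Fintype.card_fin, nsmul_eq_mul]
            rw [← ENNReal.ofReal_natCast 25, ← ENNReal.ofReal_mul (by norm_num)]
            exact ENNReal.ofReal_le_ofReal (by norm_num)
          · rw [Finset.sum_const, Finset.card_univ]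
            have hcard : (Fintype.card (Fin 26 × Fin 26 × Fin 26)) = 17576 := by
              simp [Fintype.card_prod]
            rw [hcard, nsmul_eq_mul]
            rw [← ENNReal.ofReal_natCast 17576, ← ENNReal.ofReal_mul (by norm_num)]
            exact ENNReal.ofReal_le_ofReal (by norm_num)
      _ ≤ ENNReal.ofReal
          ((26 ^ 3 * 10 ^ p * ∑ n ∈ Finset.range (N + 1), s ^ n
            + ((S.card + 2 * (N + 1) : ℕ) : ℝ) ^ 3 * s ^ (N + 1)) * X) := by
          have hA1 : (0:ℝ) ≤ 25 * (CN * ((3 / 10 : ℝ) ^ (-p) * (1 / 25 : ℝ) ^ p) * X) :=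
            mul_nonneg (by norm_num) (mul_nonneg (mul_nonneg hCN0 (by positivity)) hX0)
          have hB1 : (0:ℝ) ≤ 17576 * ((1 / 10 * l) ^ (-p) * ((G B - G A) * ν) ^ p) :=
            mul_nonneg (by norm_num) (mul_nonneg (Real.rpow_nonneg (by linarith) _)
              (Real.rpow_nonneg (mul_nonneg hGBA hν) _))
          rw [← ENNReal.ofReal_add hA1 hB1]
          apply ENNReal.ofReal_le_ofReal
          have e1 : 25 * ((3 / 10 : ℝ) ^ (-p) * (1 / 25 : ℝ) ^ p) = s := by
            rw [hsdef]
            rw [show (1 / 25 : ℝ) = (25 : ℝ)⁻¹ by norm_num,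
              Real.inv_rpow (by norm_num : (0:ℝ) ≤ 25),
              ← Real.rpow_neg (by norm_num : (0:ℝ) ≤ 25)]
            rw [← Real.mul_rpow (by norm_num) (by norm_num)]
            norm_num
          have e2 : ((1:ℝ) / 10 * l) ^ (-p) = 10 ^ p * l ^ (-p) := by
            rw [Real.mul_rpow (by norm_num) hl.le]
            congr 1
            rw [show (1 / 10 : ℝ) = (10 : ℝ)⁻¹ by norm_num,
              Real.inv_rpow (by norm_num : (0:ℝ) ≤ 10),
              Real.rpow_neg (by norm_num : (0:ℝ) ≤ 10), inv_inv]
          have e3 : 25 * (CN * ((3 / 10 : ℝ) ^ (-p) * (1 / 25 : ℝ) ^ p) * X) = CN * s * X := by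
            rw [← e1]; ring
          have e4 : (17576 : ℝ) * ((1 / 10 * l) ^ (-p) * ((G B - G A) * ν) ^ p)
              = 26 ^ 3 * 10 ^ p * X := by
            rw [e2, hXdef]; ring
          rw [e3, e4, geom_sum_succ, hCNdef, pow_succ]
          apply le_of_eq
          ring


lemma maximal (P : Measure Ω) (ξ : ℝ → Ω → ℝ) (hξ : ∀ t, Measurable (ξ t))
    (G : ℝ → ℝ) (hGc : ContinuousOn G (Icc 0 1)) (hGm : StrictMonoOn G (Icc 0 1))
    {p : ℝ} (hp2 : 2 ≤ p) (hnu : nuFun P ξ p ≠ ⊤)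
    (hmom : ∀ r s t : ℝ, 0 ≤ r → r ≤ s → s ≤ t → t ≤ 1 →
      tripleMoment P ξ p r s t ≤ ENNReal.ofReal (G t - G r) * nuFun P ξ p) :
    ∀ A B : ℝ, 0 ≤ A → A ≤ B → B ≤ 1 → ∀ S : Finset ℝ, (∀ x ∈ S, x ∈ Icc A B) →
    ∀ l : ℝ, 0 < l →
    P (Ev ξ S l) ≤ ENNReal.ofReal ((26 ^ 3 * 10 ^ p * (9 / 5) + 1)
        * (l ^ (-p) * ((G B - G A) * (nuFun P ξ p).toReal) ^ p)) := by
  intro A B hA hAB hB S hS l hl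
  set s : ℝ := 25 * (15 / 2 : ℝ) ^ (-p) with hsdef
  have hs0 : 0 ≤ s := by positivity
  have hs49 : s ≤ 4 / 9 := by
    have h1 : (15 / 2 : ℝ) ^ (-p) ≤ (15 / 2 : ℝ) ^ (-2 : ℝ) :=
      Real.rpow_le_rpow_of_exponent_le (by norm_num) (by linarith)
    have h2 : (15 / 2 : ℝ) ^ (-2 : ℝ) = 4 / 225 := by
      rw [show (-2 : ℝ) = ((-2 : ℤ) : ℝ) by norm_num, Real.rpow_intCast]
      norm_num
    rw [hsdef]; nlinarith
  have hgeom : ∀ N : ℕ, ∑ n ∈ Finset.range N, s ^ n ≤ 9 / 5 := by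
    intro N
    have heq := geom_sum_mul s N
    have hsum0 : (0:ℝ) ≤ ∑ n ∈ Finset.range N, s ^ n :=
      Finset.sum_nonneg fun n _ => by positivity
    have hsN : (0:ℝ) ≤ s ^ N := by positivity
    nlinarith
  have hν : (0:ℝ) ≤ (nuFun P ξ p).toReal := ENNReal.toReal_nonneg
  have hGBA : 0 ≤ G B - G A := by
    have := hGm.monotoneOn ⟨hA, le_trans hAB hB⟩ ⟨le_trans hA hAB, hB⟩ hAB
    linarith
  have hY : (0:ℝ) ≤ l ^ (-p) * ((G B - G A) * (nuFun P ξ p).toReal) ^ p :=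
    mul_nonneg (Real.rpow_nonneg hl.le _) (Real.rpow_nonneg (mul_nonneg hGBA hν) _)
  -- choose N with small tail
  have habs : |s| < 1 := by rw [abs_of_nonneg hs0]; linarith
  have htend := tendsto_pow_const_mul_const_pow_of_abs_lt_one 3 habs
  have hev : ∀ᶠ N : ℕ in atTop, ((N:ℝ)) ^ 3 * s ^ N < 1 / ((S.card + 2 : ℕ) : ℝ) ^ 3 :=
    htend.eventually_lt_const (by positivity)
  obtain ⟨N, hN, hN1⟩ := (hev.and (eventually_ge_atTop 1)).exists
  have htail : ((S.card + 2 * N : ℕ) : ℝ) ^ 3 * s ^ N ≤ 1 := by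
    have hnat : (S.card + 2 * N : ℕ) ≤ (S.card + 2) * N := by nlinarith [Nat.one_le_iff_ne_zero.1 hN1]
    have hc1 : ((S.card + 2 * N : ℕ) : ℝ) ≤ (((S.card + 2) * N : ℕ) : ℝ) := Nat.cast_le.2 hnat
    have hc0 : (0:ℝ) ≤ ((S.card + 2 * N : ℕ) : ℝ) := Nat.cast_nonneg _
    have hpow : ((S.card + 2 * N : ℕ) : ℝ) ^ 3 ≤ ((S.card + 2 : ℕ) : ℝ) ^ 3 * ((N:ℕ):ℝ) ^ 3 := by
      have := pow_le_pow_left₀ hc0 hc1 3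
      rw [Nat.cast_mul, mul_pow] at this
      exact this
    have hsN : (0:ℝ) ≤ s ^ N := by positivity
    have h2 : ((S.card + 2 * N : ℕ) : ℝ) ^ 3 * s ^ N
        ≤ ((S.card + 2 : ℕ) : ℝ) ^ 3 * ((N:ℝ) ^ 3 * s ^ N) := by
      have := mul_le_mul_of_nonneg_right hpow hsN
      calc ((S.card + 2 * N : ℕ) : ℝ) ^ 3 * s ^ N
          ≤ ((S.card + 2 : ℕ) : ℝ) ^ 3 * ((N:ℕ):ℝ) ^ 3 * s ^ N := this
        _ = ((S.card + 2 : ℕ) : ℝ) ^ 3 * (((N:ℕ):ℝ) ^ 3 * s ^ N) := by ring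
    have hcpos : (0:ℝ) < ((S.card + 2 : ℕ) : ℝ) ^ 3 := by positivity
    have h3 : ((S.card + 2 : ℕ) : ℝ) ^ 3 * ((N:ℝ) ^ 3 * s ^ N)
        ≤ ((S.card + 2 : ℕ) : ℝ) ^ 3 * (1 / ((S.card + 2 : ℕ) : ℝ) ^ 3) :=
      mul_le_mul_of_nonneg_left (le_of_lt hN) (le_of_lt hcpos)
    have h4 : ((S.card + 2 : ℕ) : ℝ) ^ 3 * (1 / ((S.card + 2 : ℕ) : ℝ) ^ 3) = 1 := by
      field_simp
    linarith
  refine le_trans (maximal_N P ξ hξ G hGc hGm hp2 hnu hmom N A B hA hAB hB S hS l hl)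
    (ENNReal.ofReal_le_ofReal ?_)
  rw [← hsdef]
  refine mul_le_mul_of_nonneg_right ?_ hY
  have h10 : (0:ℝ) ≤ 26 ^ 3 * 10 ^ p := by positivity
  have := mul_le_mul_of_nonneg_left (hgeom N) h10
  linarith

omit [MeasurableSpace Ω] in
lemma ev_mono (ξ : ℝ → Ω → ℝ) {S T : Finset ℝ} (hST : S ⊆ T) (l : ℝ) :
    Ev ξ S l ⊆ Ev ξ T l := by
  rintro ω ⟨x, hx, y, hy, z, hz, h1, h2, h3⟩
  exact ⟨x, hST hx, y, hST hy, z, hST hz, h1, h2, h3⟩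

lemma window (P : Measure Ω) (ξ : ℝ → Ω → ℝ) (hξ : ∀ t, Measurable (ξ t))
    (G : ℝ → ℝ) (hGc : ContinuousOn G (Icc 0 1)) (hGm : StrictMonoOn G (Icc 0 1))
    {p : ℝ} (hp2 : 2 ≤ p) (hnu : nuFun P ξ p ≠ ⊤)
    (hmom : ∀ r s t : ℝ, 0 ≤ r → r ≤ s → s ≤ t → t ≤ 1 →
      tripleMoment P ξ p r s t ≤ ENNReal.ofReal (G t - G r) * nuFun P ξ p)
    {A B u : ℝ} (hA : 0 ≤ A) (hAB : A ≤ B) (hB : B ≤ 1) (hu : 0 < u) :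
    P {ω | ∃ q₁ q₂ q₃ : ℚ, A ≤ (q₁:ℝ) ∧ (q₁:ℝ) ≤ (q₂:ℝ) ∧ (q₂:ℝ) ≤ (q₃:ℝ) ∧ (q₃:ℝ) ≤ B ∧
        u < procDelta ξ (q₁:ℝ) (q₂:ℝ) (q₃:ℝ) ω} ≤
      ENNReal.ofReal ((26 ^ 3 * 10 ^ p * (9 / 5) + 1)
        * (u ^ (-p) * ((G B - G A) * (nuFun P ξ p).toReal) ^ p)) := by
  set F : ℕ → Finset ℝ := fun n => insert A (insert B
    (((Finset.range n).image (fun m => (((Denumerable.eqv ℚ).symm m : ℚ) : ℝ))).filter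
      (fun x => x ∈ Icc A B))) with hF
  have hFmono : ∀ m n : ℕ, m ≤ n → F m ⊆ F n := by
    intro m n hmn
    apply Finset.insert_subset_insert
    apply Finset.insert_subset_insert
    apply Finset.filter_subset_filter
    exact Finset.image_subset_image (Finset.range_subset_range.2 hmn)
  have hFIcc : ∀ n, ∀ x ∈ F n, x ∈ Icc A B := by
    intro n x hx
    simp only [hF, Finset.mem_insert, Finset.mem_filter] at hx
    rcases hx with h | h | ⟨_, h⟩
    · rw [h]; exact ⟨le_rfl, hAB⟩
    · rw [h]; exact ⟨hAB, le_rfl⟩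
    · exact h
  have hqmem : ∀ (q : ℚ) (n : ℕ), (Denumerable.eqv ℚ) q < n → A ≤ (q:ℝ) → (q:ℝ) ≤ B →
      (q:ℝ) ∈ F n := by
    intro q n hqn h1 h2
    simp only [hF, Finset.mem_insert, Finset.mem_filter, Finset.mem_image, Finset.mem_range]
    right; right
    exact ⟨⟨(Denumerable.eqv ℚ) q, hqn, by rw [Equiv.symm_apply_apply]⟩, h1, h2⟩
  have hsub : {ω | ∃ q₁ q₂ q₃ : ℚ, A ≤ (q₁:ℝ) ∧ (q₁:ℝ) ≤ (q₂:ℝ) ∧ (q₂:ℝ) ≤ (q₃:ℝ) ∧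
      (q₃:ℝ) ≤ B ∧ u < procDelta ξ (q₁:ℝ) (q₂:ℝ) (q₃:ℝ) ω} ⊆ ⋃ n, Ev ξ (F n) u := by
    rintro ω ⟨q₁, q₂, q₃, h1, h2, h3, h4, h5⟩
    refine Set.mem_iUnion.2 ⟨max (max ((Denumerable.eqv ℚ) q₁) ((Denumerable.eqv ℚ) q₂))
      ((Denumerable.eqv ℚ) q₃) + 1, ?_⟩
    refine ⟨(q₁:ℝ), hqmem q₁ _ (by omega) h1 (le_trans h2 (le_trans h3 h4)),
      (q₂:ℝ), hqmem q₂ _ (by omega) (le_trans h1 h2) (le_trans h3 h4),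
      (q₃:ℝ), hqmem q₃ _ (by omega) (le_trans h1 (le_trans h2 h3)) h4, h2, h3, h5⟩
  have hdir : Directed (fun x1 x2 : Set Ω => x1 ⊆ x2) (fun n => Ev ξ (F n) u) := by
    intro m n
    exact ⟨max m n, ev_mono ξ (hFmono m _ (le_max_left m n)) u,
      ev_mono ξ (hFmono n _ (le_max_right m n)) u⟩
  calc P {ω | ∃ q₁ q₂ q₃ : ℚ, A ≤ (q₁:ℝ) ∧ (q₁:ℝ) ≤ (q₂:ℝ) ∧ (q₂:ℝ) ≤ (q₃:ℝ) ∧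
        (q₃:ℝ) ≤ B ∧ u < procDelta ξ (q₁:ℝ) (q₂:ℝ) (q₃:ℝ) ω}
      ≤ P (⋃ n, Ev ξ (F n) u) := measure_mono hsub
    _ = ⨆ n, P (Ev ξ (F n) u) := hdir.measure_iUnion
    _ ≤ ENNReal.ofReal ((26 ^ 3 * 10 ^ p * (9 / 5) + 1)
        * (u ^ (-p) * ((G B - G A) * (nuFun P ξ p).toReal) ^ p)) :=
      iSup_le fun n => maximal P ξ hξ G hGc hGm hp2 hnu hmom A B hA hAB hB (F n)
        (hFIcc n) u hu


/-! ### contModulus facts -/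

def modSet (G : ℝ → ℝ) (h : ℝ) : Set ℝ :=
  {x : ℝ | ∃ r t : ℝ, r ∈ Icc (0 : ℝ) 1 ∧ t ∈ Icc (0 : ℝ) 1 ∧ |r - t| ≤ h ∧ x = |G t - G r|}

lemma contModulus_eq (G : ℝ → ℝ) (h : ℝ) : contModulus G h = sSup (modSet G h) := rfl

lemma modSet_zero_mem {G : ℝ → ℝ} {h : ℝ} (hh : 0 ≤ h) : (0:ℝ) ∈ modSet G h :=
  ⟨0, 0, ⟨le_rfl, zero_le_one⟩, ⟨le_rfl, zero_le_one⟩, by simpa using hh, by simp⟩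

lemma modSet_bdd {G : ℝ → ℝ} (hGm : MonotoneOn G (Icc 0 1)) (h : ℝ) :
    ∀ x ∈ modSet G h, x ≤ G 1 - G 0 := by
  rintro x ⟨r, t, hr, ht, _, rfl⟩
  have h1 : G 0 ≤ G r := hGm ⟨le_rfl, zero_le_one⟩ hr hr.1
  have h2 : G r ≤ G 1 := hGm hr ⟨zero_le_one, le_rfl⟩ hr.2
  have h3 : G 0 ≤ G t := hGm ⟨le_rfl, zero_le_one⟩ ht ht.1
  have h4 : G t ≤ G 1 := hGm ht ⟨zero_le_one, le_rfl⟩ ht.2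
  rw [abs_le]; constructor <;> linarith

lemma modSet_bddAbove {G : ℝ → ℝ} (hGm : MonotoneOn G (Icc 0 1)) (h : ℝ) :
    BddAbove (modSet G h) := ⟨G 1 - G 0, fun x hx => modSet_bdd hGm h x hx⟩

lemma contModulus_nonneg {G : ℝ → ℝ} (hGm : MonotoneOn G (Icc 0 1)) {h : ℝ} (hh : 0 ≤ h) :
    0 ≤ contModulus G h :=
  le_csSup (modSet_bddAbove hGm h) (modSet_zero_mem hh)

lemma le_contModulus {G : ℝ → ℝ} (hGm : MonotoneOn G (Icc 0 1)) {h r t : ℝ}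
    (hr : r ∈ Icc (0:ℝ) 1) (ht : t ∈ Icc (0:ℝ) 1) (hrt : |r - t| ≤ h) :
    G t - G r ≤ contModulus G h :=
  le_trans (le_abs_self _) (le_csSup (modSet_bddAbove hGm h) ⟨r, t, hr, ht, hrt, rfl⟩)

lemma contModulus_le {G : ℝ → ℝ} {h c : ℝ} (hh : 0 ≤ h)
    (hc : ∀ x ∈ modSet G h, x ≤ c) : contModulus G h ≤ c :=
  csSup_le ⟨0, modSet_zero_mem hh⟩ hc

/-! ### degenerate case -/

lemma kappa_null (P : Measure Ω) (ξ : ℝ → Ω → ℝ) (hξ : ∀ t, Measurable (ξ t))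
    {p : ℝ} (hp2 : 2 ≤ p)
    (G : ℝ → ℝ)
    (hmom : ∀ r s t : ℝ, 0 ≤ r → r ≤ s → s ≤ t → t ≤ 1 →
      tripleMoment P ξ p r s t ≤ ENNReal.ofReal (G t - G r) * nuFun P ξ p)
    (hnu0 : nuFun P ξ p = 0) {u h : ℝ} (hu : 0 < u) :
    P (KappaGt ξ h u) = 0 := by
  have hp : (0:ℝ) < p := by linarith
  have hnull : ∀ q : ℚ × ℚ × ℚ,
      P {ω | 0 ≤ ((q.1:ℝ)) ∧ (q.1:ℝ) ≤ (q.2.1:ℝ) ∧ (q.2.1:ℝ) ≤ (q.2.2:ℝ) ∧ (q.2.2:ℝ) ≤ 1 ∧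
        u < procDelta ξ (q.1:ℝ) (q.2.1:ℝ) (q.2.2:ℝ) ω} = 0 := by
    rintro ⟨q₁, q₂, q₃⟩
    by_cases hord : 0 ≤ ((q₁:ℝ)) ∧ (q₁:ℝ) ≤ (q₂:ℝ) ∧ (q₂:ℝ) ≤ (q₃:ℝ) ∧ (q₃:ℝ) ≤ 1
    · have hm := hmom q₁ q₂ q₃ hord.1 hord.2.1 hord.2.2.1 hord.2.2.2
      rw [hnu0, mul_zero, le_zero_iff] at hm
      have hI : ∫⁻ ω, ENNReal.ofReal (procDelta ξ (q₁:ℝ) (q₂:ℝ) (q₃:ℝ) ω ^ p) ∂P = 0 := by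
        have := ENNReal.rpow_eq_zero_iff.mp hm
        rcases this with ⟨h1, _⟩ | ⟨_, h2⟩
        · exact h1
        · exfalso
          have : (0:ℝ) < 1 / p := by positivity
          linarith
      have hae := (lintegral_eq_zero_iff
        (((delta_meas ξ hξ (q₁:ℝ) (q₂:ℝ) (q₃:ℝ)).pow measurable_const)).ennreal_ofReal).mp hI
      have hz : P {ω | ENNReal.ofReal (procDelta ξ (q₁:ℝ) (q₂:ℝ) (q₃:ℝ) ω ^ p) ≠ 0} = 0 :=
        ae_iff.mp hae
      refine measure_mono_null ?_ hz
      rintro ω ⟨_, _, _, _, hδ⟩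
      have hδpos : (0:ℝ) < procDelta ξ (q₁:ℝ) (q₂:ℝ) (q₃:ℝ) ω := lt_trans hu hδ
      have : (0:ℝ) < procDelta ξ (q₁:ℝ) (q₂:ℝ) (q₃:ℝ) ω ^ p := Real.rpow_pos_of_pos hδpos p
      simp only [Set.mem_setOf_eq, ne_eq, ENNReal.ofReal_eq_zero, not_le]
      exact this
    · have : {ω : Ω | 0 ≤ ((q₁:ℝ)) ∧ (q₁:ℝ) ≤ (q₂:ℝ) ∧ (q₂:ℝ) ≤ (q₃:ℝ) ∧ (q₃:ℝ) ≤ 1 ∧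
          u < procDelta ξ (q₁:ℝ) (q₂:ℝ) (q₃:ℝ) ω} = ∅ := by
        ext ω
        simp only [Set.mem_setOf_eq, Set.mem_empty_iff_false, iff_false]
        tauto
      rw [this, measure_empty]
  have hsub : KappaGt ξ h u ⊆ ⋃ q : ℚ × ℚ × ℚ,
      {ω | 0 ≤ ((q.1:ℝ)) ∧ (q.1:ℝ) ≤ (q.2.1:ℝ) ∧ (q.2.1:ℝ) ≤ (q.2.2:ℝ) ∧ (q.2.2:ℝ) ≤ 1 ∧
        u < procDelta ξ (q.1:ℝ) (q.2.1:ℝ) (q.2.2:ℝ) ω} := by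
    rintro ω ⟨t₁, t, t₂, h0, h1, h2, _, h4, h5⟩
    exact Set.mem_iUnion.2 ⟨⟨t₁, t, t₂⟩, h0, h1, h2, h4, h5⟩
  refine le_antisymm ?_ zero_le
  refine le_trans (measure_mono hsub) (le_trans (measure_iUnion_le _) ?_)
  exact le_of_eq (ENNReal.tsum_eq_zero.mpr hnull)

/-! ### main bound -/

lemma main_bound (P : Measure Ω) (ξ : ℝ → Ω → ℝ) (hξ : ∀ t, Measurable (ξ t))
    (G : ℝ → ℝ) (hGc : ContinuousOn G (Icc 0 1)) (hGm : StrictMonoOn G (Icc 0 1))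
    {p : ℝ} (hp2 : 2 ≤ p) (hnu : nuFun P ξ p ≠ ⊤)
    (hmom : ∀ r s t : ℝ, 0 ≤ r → r ≤ s → s ≤ t → t ≤ 1 →
      tripleMoment P ξ p r s t ≤ ENNReal.ofReal (G t - G r) * nuFun P ξ p)
    {u h : ℝ} (hu : 0 < u) (hh : 0 < h) (hh1 : h ≤ 1) :
    P (KappaGt ξ h u) ≤ ENNReal.ofReal (2 * (26 ^ 3 * 10 ^ p * (9 / 5) + 1) * u ^ (-p)
      * (nuFun P ξ p).toReal ^ p * (G 1 - G 0) ^ p * contModulus G (2 * h) ^ (p - 1)) := by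
  have hGmono : MonotoneOn G (Icc 0 1) := hGm.monotoneOn
  set Kp : ℝ := 26 ^ 3 * 10 ^ p * (9 / 5) + 1 with hKp
  set ν : ℝ := (nuFun P ξ p).toReal with hν
  have hν0 : 0 ≤ ν := ENNReal.toReal_nonneg
  have hΓ : 0 ≤ G 1 - G 0 := by
    have := hGmono ⟨le_rfl, zero_le_one⟩ ⟨zero_le_one, le_rfl⟩ zero_le_one; linarith
  by_cases hG1 : 1 ≤ G 1 - G 0
  swap
  · -- degenerate: nuFun = 0
    have hnu0 : nuFun P ξ p = 0 := by
      by_contra hne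
      have hle : nuFun P ξ p ≤ ENNReal.ofReal (G 1 - G 0) * nuFun P ξ p := by
        rw [nuFun]
        refine iSup_le fun r => iSup_le fun s0 => iSup_le fun t => iSup_le fun hc => ?_
        refine le_trans (hmom r s0 t hc.1 hc.2.1 hc.2.2.1 hc.2.2.2) ?_
        refine mul_le_mul_left (ENNReal.ofReal_le_ofReal ?_) _
        have hr1 : r ∈ Icc (0:ℝ) 1 :=
          ⟨hc.1, le_trans hc.2.1 (le_trans hc.2.2.1 hc.2.2.2)⟩
        have ht1 : t ∈ Icc (0:ℝ) 1 :=
          ⟨le_trans hc.1 (le_trans hc.2.1 hc.2.2.1), hc.2.2.2⟩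
        have h1 : G 0 ≤ G r := hGmono ⟨le_rfl, zero_le_one⟩ hr1 hc.1
        have h2 : G t ≤ G 1 := hGmono ht1 ⟨zero_le_one, le_rfl⟩ hc.2.2.2
        linarith
      have hlt : ENNReal.ofReal (G 1 - G 0) * nuFun P ξ p < 1 * nuFun P ξ p := by
        rw [ENNReal.mul_lt_mul_iff_left hne hnu]
        exact ENNReal.ofReal_lt_one.2 (by linarith)
      rw [one_mul] at hlt
      exact absurd hle (not_le.2 hlt)
    rw [kappa_null P ξ hξ hp2 G hmom hnu0 hu]
    exact zero_le
  -- main case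
  have hp : (0:ℝ) < p := by linarith
  set M : ℕ := Nat.floor (1 / h) with hM
  set a : ℕ → ℝ := fun j => min ((j : ℝ) * h) 1 with ha
  have ha01 : ∀ j, a j ∈ Icc (0:ℝ) 1 := by
    intro j
    constructor
    · exact le_min (by positivity) zero_le_one
    · exact min_le_right _ _
  have haab : ∀ i : ℕ, a i ≤ a (i + 2) := by
    intro i
    apply min_le_min _ le_rfl
    have : (i:ℝ) ≤ (i:ℝ) + 2 := by linarith
    push_cast
    nlinarith
  set w : ℝ := contModulus G (2 * h) with hwdef
  have hw0 : 0 ≤ w := contModulus_nonneg hGmono (by linarith)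
  have hd0 : ∀ i : ℕ, 0 ≤ G (a (i + 2)) - G (a i) := fun i =>
    sub_nonneg.2 (hGmono (ha01 i) (ha01 (i + 2)) (haab i))
  have hΔw : ∀ i : ℕ, G (a (i + 2)) - G (a i) ≤ w := by
    intro i
    apply le_contModulus hGmono (ha01 i) (ha01 (i + 2))
    rw [abs_sub_comm, abs_of_nonneg (by linarith [hd0 i, haab i] : (0:ℝ) ≤ a (i+2) - a i)]
    rcases le_total ((i:ℝ) * h) 1 with hc | hc
    · have h1 : a i = (i:ℝ) * h := min_eq_left hc
      have h2 : a (i + 2) ≤ ((i + 2 : ℕ) : ℝ) * h := min_le_left _ _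
      rw [h1]
      push_cast at h2 ⊢
      nlinarith
    · have h1 : a i = 1 := min_eq_right hc
      have h2 : a (i + 2) ≤ 1 := min_le_right _ _
      rw [h1]
      nlinarith
  have hΔp : ∀ i : ℕ, (G (a (i + 2)) - G (a i)) ^ p
      ≤ w ^ (p - 1) * (G (a (i + 2)) - G (a i)) := by
    intro i
    rcases eq_or_lt_of_le (hd0 i) with he | hpos
    · rw [← he, Real.zero_rpow hp.ne', mul_zero]
    · have e1 : (G (a (i + 2)) - G (a i)) ^ p
          = (G (a (i + 2)) - G (a i)) ^ (p - 1) * (G (a (i + 2)) - G (a i)) := by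
        have := Real.rpow_add hpos (p - 1) 1
        rw [Real.rpow_one] at this
        rw [show p - 1 + 1 = p by ring] at this
        exact this
      rw [e1]
      exact mul_le_mul_of_nonneg_right
        (Real.rpow_le_rpow (hd0 i) (hΔw i) (by linarith)) (hd0 i)
  have hsum : ∑ i ∈ Finset.range (M + 1), (G (a (i + 2)) - G (a i)) ≤ 2 * (G 1 - G 0) := by
    rw [telescope (fun j => G (a j)) (M + 1)]
    have hb : ∀ j : ℕ, G 0 ≤ G (a j) ∧ G (a j) ≤ G 1 := fun j =>
      ⟨hGmono ⟨le_rfl, zero_le_one⟩ (ha01 j) (ha01 j).1,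
       hGmono (ha01 j) ⟨zero_le_one, le_rfl⟩ (ha01 j).2⟩
    have h1 := hb (M + 1 + 1); have h2 := hb (M + 1); have h3 := hb 1; have h4 := hb 0
    linarith [h1.1, h1.2, h2.1, h2.2, h3.1, h3.2, h4.1, h4.2]
  -- window events
  have hsub : KappaGt ξ h u ⊆ ⋃ i ∈ Finset.range (M + 1),
      {ω | ∃ q₁ q₂ q₃ : ℚ, a i ≤ (q₁:ℝ) ∧ (q₁:ℝ) ≤ (q₂:ℝ) ∧ (q₂:ℝ) ≤ (q₃:ℝ) ∧
        (q₃:ℝ) ≤ a (i + 2) ∧ u < procDelta ξ (q₁:ℝ) (q₂:ℝ) (q₃:ℝ) ω} := by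
    rintro ω ⟨t₁, t, t₂, h0, h1, h2, h3, h4, h5⟩
    set i : ℕ := Nat.floor ((t₁:ℝ) / h) with hi
    have ht11 : (t₁:ℝ) ≤ 1 := le_trans h1 (le_trans h2 h4)
    have hiM : i ≤ M := Nat.floor_le_floor (by gcongr)
    refine Set.mem_biUnion (Finset.mem_range.2 (Nat.lt_succ_of_le hiM)) ?_
    refine ⟨t₁, t, t₂, ?_, h1, h2, ?_, h5⟩
    · have h1' : (i:ℝ) ≤ (t₁:ℝ) / h := Nat.floor_le (by positivity)
      have h2' : (i:ℝ) * h ≤ t₁ := by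
        rw [← le_div_iff₀ hh]; exact h1'
      exact le_trans (min_le_left _ _) h2'
    · refine le_min ?_ h4
      have h2' : (t₁:ℝ) / h < i + 1 := Nat.lt_floor_add_one _
      rw [div_lt_iff₀ hh] at h2'
      push_cast
      linarith
  have hwin : ∀ i : ℕ,
      P {ω | ∃ q₁ q₂ q₃ : ℚ, a i ≤ (q₁:ℝ) ∧ (q₁:ℝ) ≤ (q₂:ℝ) ∧ (q₂:ℝ) ≤ (q₃:ℝ) ∧
        (q₃:ℝ) ≤ a (i + 2) ∧ u < procDelta ξ (q₁:ℝ) (q₂:ℝ) (q₃:ℝ) ω} ≤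
      ENNReal.ofReal (Kp * (u ^ (-p) * ((G (a (i + 2)) - G (a i)) * ν) ^ p)) := by
    intro i
    exact window P ξ hξ G hGc hGm hp2 hnu hmom (ha01 i).1 (haab i) (ha01 (i + 2)).2 hu
  have hKp0 : (0:ℝ) ≤ Kp := by rw [hKp]; positivity
  have hu0 : (0:ℝ) ≤ u ^ (-p) := Real.rpow_nonneg hu.le _
  calc P (KappaGt ξ h u)
      ≤ ∑ i ∈ Finset.range (M + 1),
        P {ω | ∃ q₁ q₂ q₃ : ℚ, a i ≤ (q₁:ℝ) ∧ (q₁:ℝ) ≤ (q₂:ℝ) ∧ (q₂:ℝ) ≤ (q₃:ℝ) ∧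
          (q₃:ℝ) ≤ a (i + 2) ∧ u < procDelta ξ (q₁:ℝ) (q₂:ℝ) (q₃:ℝ) ω} :=
        le_trans (measure_mono hsub) (measure_biUnion_finset_le _ _)
    _ ≤ ∑ i ∈ Finset.range (M + 1),
        ENNReal.ofReal (Kp * (u ^ (-p) * ((G (a (i + 2)) - G (a i)) * ν) ^ p)) :=
        Finset.sum_le_sum fun i _ => hwin i
    _ = ENNReal.ofReal (∑ i ∈ Finset.range (M + 1),
        Kp * (u ^ (-p) * ((G (a (i + 2)) - G (a i)) * ν) ^ p)) := by
        rw [ENNReal.ofReal_sum_of_nonneg]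
        intro i _
        exact mul_nonneg hKp0 (mul_nonneg hu0
          (Real.rpow_nonneg (mul_nonneg (hd0 i) hν0) _))
    _ ≤ ENNReal.ofReal (2 * Kp * u ^ (-p) * ν ^ p * (G 1 - G 0) ^ p * w ^ (p - 1)) := by
        apply ENNReal.ofReal_le_ofReal
        have hwp : (0:ℝ) ≤ w ^ (p - 1) := Real.rpow_nonneg hw0 _
        have hνp : (0:ℝ) ≤ ν ^ p := Real.rpow_nonneg hν0 _
        have step1 : ∀ i ∈ Finset.range (M + 1),
            Kp * (u ^ (-p) * ((G (a (i + 2)) - G (a i)) * ν) ^ p)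
            ≤ (Kp * u ^ (-p) * ν ^ p * w ^ (p - 1)) * (G (a (i + 2)) - G (a i)) := by
          intro i _
          rw [Real.mul_rpow (hd0 i) hν0]
          calc Kp * (u ^ (-p) * ((G (a (i + 2)) - G (a i)) ^ p * ν ^ p))
              ≤ Kp * (u ^ (-p) * ((w ^ (p - 1) * (G (a (i + 2)) - G (a i))) * ν ^ p)) := by
                refine mul_le_mul_of_nonneg_left (mul_le_mul_of_nonneg_left ?_ hu0) hKp0
                exact mul_le_mul_of_nonneg_right (hΔp i) hνp
            _ = (Kp * u ^ (-p) * ν ^ p * w ^ (p - 1)) * (G (a (i + 2)) - G (a i)) := by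
                ring
        have hstep := Finset.sum_le_sum step1
        have hR : (∑ i ∈ Finset.range (M + 1),
            Kp * u ^ (-p) * ν ^ p * w ^ (p - 1) * (G (a (i + 2)) - G (a i)))
            = Kp * u ^ (-p) * ν ^ p * w ^ (p - 1)
              * ∑ i ∈ Finset.range (M + 1), (G (a (i + 2)) - G (a i)) := by
          rw [Finset.mul_sum]
        rw [hR] at hstep
        have hfac : (0:ℝ) ≤ Kp * u ^ (-p) * ν ^ p * w ^ (p - 1) :=
          mul_nonneg (mul_nonneg (mul_nonneg hKp0 hu0) hνp) hwp
        have h2' := mul_le_mul_of_nonneg_left hsum hfac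
        have h3 : (G 1 - G 0) ≤ (G 1 - G 0) ^ p := by
          have := Real.rpow_le_rpow_of_exponent_le hG1 (by linarith : (1:ℝ) ≤ p)
          rwa [Real.rpow_one] at this
        have h4 := mul_le_mul_of_nonneg_left h3 hfac
        have h5 : Kp * u ^ (-p) * ν ^ p * w ^ (p - 1) * (2 * (G 1 - G 0))
            = 2 * (Kp * u ^ (-p) * ν ^ p * w ^ (p - 1) * (G 1 - G 0)) := by ring
        have h6 : 2 * (Kp * u ^ (-p) * ν ^ p * w ^ (p - 1) * (G 1 - G 0) ^ p)
            = 2 * Kp * u ^ (-p) * ν ^ p * (G 1 - G 0) ^ p * w ^ (p - 1) := by ring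
        linarith


end Prop42

/-- Proposition 4.2, estimates (4.10)–(4.12): for every `p ∈ [2,b)` there is a finite constant
`K_p`, depending only on `p`, with
`P(κ[ξ](h) > u) ≤ 2 K_p u^{-p} ν(p)^p (G(1)-G(0))^p (ω[G](2h))^{p-1}` for all `u > 0`,
`h ∈ (0,1]`; in particular `P(κ[ξ](h) > ε) → 0` as `h → 0⁺`, for every `ε > 0`. -/
theorem proposition_4_2 (b : ℝ≥0∞) (hb : 2 < b) (p : ℝ) (hp2 : 2 ≤ p)
    (hpb : ENNReal.ofReal p < b) :
    ∃ K : ℝ, 0 < K ∧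
      ∀ (Ω : Type) [MeasurableSpace Ω] (P : Measure Ω), IsProbabilityMeasure P →
      ∀ ξ : ℝ → Ω → ℝ, (∀ t : ℝ, Measurable (ξ t)) →
      (∀ p' : ℝ, 2 ≤ p' → ENNReal.ofReal p' < b → nuFun P ξ p' ≠ ⊤) →
      ∀ G : ℝ → ℝ, ContinuousOn G (Icc 0 1) → StrictMonoOn G (Icc 0 1) → G 0 = 0 →
      (∀ p' : ℝ, 2 ≤ p' → ENNReal.ofReal p' < b →
        ∀ r s t : ℝ, 0 ≤ r → r ≤ s → s ≤ t → t ≤ 1 →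
          tripleMoment P ξ p' r s t ≤ ENNReal.ofReal (G t - G r) * nuFun P ξ p') →
      (∀ u : ℝ, 0 < u → ∀ h : ℝ, 0 < h → h ≤ 1 →
        P (KappaGt ξ h u) ≤
          ENNReal.ofReal (2 * K * u ^ (-p) * (nuFun P ξ p).toReal ^ p *
            (G 1 - G 0) ^ p * contModulus G (2 * h) ^ (p - 1))) ∧
      (∀ ε : ℝ, 0 < ε →
        Tendsto (fun h : ℝ => P (KappaGt ξ h ε)) (nhdsWithin 0 (Ioi 0)) (nhds 0)) := by
  refine ⟨26 ^ 3 * 10 ^ p * (9 / 5) + 1, by positivity, ?_⟩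
  intro Ω mΩ P hP ξ hξ hnuAll G hGc hGm hG0 hmomAll
  have hnu : nuFun P ξ p ≠ ⊤ := hnuAll p hp2 hpb
  have hmom := hmomAll p hp2 hpb
  have hGmono : MonotoneOn G (Icc 0 1) := hGm.monotoneOn
  have hbound : ∀ u : ℝ, 0 < u → ∀ h : ℝ, 0 < h → h ≤ 1 →
      P (KappaGt ξ h u) ≤
        ENNReal.ofReal (2 * (26 ^ 3 * 10 ^ p * (9 / 5) + 1) * u ^ (-p) *
          (nuFun P ξ p).toReal ^ p * (G 1 - G 0) ^ p * contModulus G (2 * h) ^ (p - 1)) :=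
    fun u hu h hh hh1 => Prop42.main_bound P ξ hξ G hGc hGm hp2 hnu hmom hu hh hh1
  refine ⟨hbound, ?_⟩
  intro ε hε
  set C : ℝ := 2 * (26 ^ 3 * 10 ^ p * (9 / 5) + 1) * ε ^ (-p) * (nuFun P ξ p).toReal ^ p
    * (G 1 - G 0) ^ p with hC
  have hupper : ∀ᶠ h in nhdsWithin (0:ℝ) (Ioi 0),
      P (KappaGt ξ h ε) ≤ ENNReal.ofReal (C * contModulus G (2 * h) ^ (p - 1)) := by
    filter_upwards [Ioc_mem_nhdsGT_of_mem (α := ℝ) ⟨le_rfl, zero_lt_one⟩] with h hmem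
    exact hbound ε hε h hmem.1 hmem.2
  have hmod : Tendsto (fun h : ℝ => contModulus G (2 * h)) (nhdsWithin (0:ℝ) (Ioi 0)) (nhds 0) := by
    rw [Metric.tendsto_nhds]
    intro δ hδ
    have huc : UniformContinuousOn G (Icc 0 1) :=
      isCompact_Icc.uniformContinuousOn_of_continuous hGc
    rw [Metric.uniformContinuousOn_iff] at huc
    obtain ⟨d, hd, hd'⟩ := huc (δ / 2) (by linarith)
    have hd4 : (0:ℝ) < d / 4 := by linarith
    filter_upwards [Ioo_mem_nhdsGT_of_mem (α := ℝ) ⟨le_rfl, hd4⟩] with h hmem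
    have hh0 : (0:ℝ) < h := hmem.1
    have hhd : 2 * h < d := by linarith [hmem.2]
    have hble : contModulus G (2 * h) ≤ δ / 2 := by
      apply Prop42.contModulus_le (by linarith)
      rintro x ⟨r, t, hr, ht, hrt, rfl⟩
      have hdist : dist t r < d := by
        rw [Real.dist_eq, abs_sub_comm]
        exact lt_of_le_of_lt hrt hhd
      have := hd' t ht r hr hdist
      rw [Real.dist_eq] at this
      exact le_of_lt this
    have hnn : 0 ≤ contModulus G (2 * h) := Prop42.contModulus_nonneg hGmono (by linarith)
    rw [Real.dist_eq, sub_zero, abs_of_nonneg hnn]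
    linarith
  have h1 : Tendsto (fun t : ℝ => t ^ (p - 1)) (nhds 0) (nhds 0) := by
    have hc := Real.continuousAt_rpow_const 0 (p - 1) (Or.inr (by linarith))
    have h0 : (0:ℝ) ^ (p - 1) = 0 := Real.zero_rpow (by linarith)
    simpa [ContinuousAt, h0] using hc
  have h2 : Tendsto (fun t : ℝ => C * t ^ (p - 1)) (nhds 0) (nhds 0) := by
    have := h1.const_mul C
    simpa using this
  have hcont : Tendsto (fun t : ℝ => ENNReal.ofReal (C * t ^ (p - 1))) (nhds 0) (nhds 0) := by
    have := (ENNReal.continuous_ofReal.tendsto 0).comp h2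
    simpa [Function.comp_def] using this
  have hupper' : Tendsto (fun h : ℝ => ENNReal.ofReal (C * contModulus G (2 * h) ^ (p - 1)))
      (nhdsWithin (0:ℝ) (Ioi 0)) (nhds 0) := by
    have := hcont.comp hmod
    simpa [Function.comp_def] using this
  exact tendsto_of_tendsto_of_tendsto_of_le_of_le' tendsto_const_nhds hupper'
    (Filter.Eventually.of_forall fun _ => zero_le) hupper
end
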